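/- arXiv:2210.16106 — 14 statements merged into one kernel-verified Lean document; each statement's English description precedes it below -/
import Mathlib

section
/- Suppose x follows the planar circular-field dynamics. Then the auxiliary states R(t) = x(t)·ẋ(t) and S(t) = (x(t)×ẋ(t))·b are differentiable and satisfy, for all t ≥ 0, R'(t) = kcf·R(t)·S(t)/(R(t)² + S(t)²) + ‖ẋ(t)‖² and S'(t) = −kcf·R(t)²/(R(t)² + S(t)²). -/
open scoped RealInnerProductSpace

/-- The cross product on `ℝ³`. -/
noncomputable def cross (a b : EuclideanSpace ℝ (Fin 3)) : EuclideanSpace ℝ (Fin 3) :=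
  (EuclideanSpace.equiv (Fin 3) ℝ).symm
    ![a 1 * b 2 - a 2 * b 1, a 2 * b 0 - a 0 * b 2, a 0 * b 1 - a 1 * b 0]

private lemma inner3 (u w : EuclideanSpace ℝ (Fin 3)) :
    ⟪u, w⟫ = u 0 * w 0 + u 1 * w 1 + u 2 * w 2 := by
  simp [PiLp.inner_apply, Fin.sum_univ_three]; ring

private lemma norm3 (u : EuclideanSpace ℝ (Fin 3)) :
    ‖u‖ ^ 2 = u 0 ^ 2 + u 1 ^ 2 + u 2 ^ 2 := by
  rw [← real_inner_self_eq_norm_sq]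
  rw [inner3]; ring

private lemma cross_apply0 (a c : EuclideanSpace ℝ (Fin 3)) :
    cross a c 0 = a 1 * c 2 - a 2 * c 1 := rfl
private lemma cross_apply1 (a c : EuclideanSpace ℝ (Fin 3)) :
    cross a c 1 = a 2 * c 0 - a 0 * c 2 := rfl
private lemma cross_apply2 (a c : EuclideanSpace ℝ (Fin 3)) :
    cross a c 2 = a 0 * c 1 - a 1 * c 0 := rfl

private lemma proj_deriv {f : ℝ → EuclideanSpace ℝ (Fin 3)}
    {f' : EuclideanSpace ℝ (Fin 3)} {t : ℝ} (h : HasDerivAt f f' t) (i : Fin 3) :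
    HasDerivAt (fun s => f s i) (f' i) t := by
  exact (EuclideanSpace.proj (𝕜 := ℝ) i).hasFDerivAt.comp_hasDerivAt t h

private lemma key3 (x0 x1 x2 v0 v1 v2 b0 b1 b2 : ℝ)
    (hp : b0*x0+b1*x1+b2*x2 = 0) (hq : b0*v0+b1*v1+b2*v2 = 0)
    (hn : b0^2+b1^2+b2^2 = 1) :
    (x0*v0+x1*v1+x2*v2)^2 + ((x1*v2-x2*v1)*b0+(x2*v0-x0*v2)*b1+(x0*v1-x1*v0)*b2)^2
      = (x0^2+x1^2+x2^2)*(v0^2+v1^2+v2^2) := by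
  linear_combination
    (-(v0*((b0*x0+b1*x1+b2*x2)*v0-(b0*v0+b1*v1+b2*v2)*x0)
       + v1*((b0*x0+b1*x1+b2*x2)*v1-(b0*v0+b1*v1+b2*v2)*x1)
       + v2*((b0*x0+b1*x1+b2*x2)*v2-(b0*v0+b1*v1+b2*v2)*x2))) * hp
    + ((x0*((b0*x0+b1*x1+b2*x2)*v0-(b0*v0+b1*v1+b2*v2)*x0)
       + x1*((b0*x0+b1*x1+b2*x2)*v1-(b0*v0+b1*v1+b2*v2)*x1)
       + x2*((b0*x0+b1*x1+b2*x2)*v2-(b0*v0+b1*v1+b2*v2)*x2))) * hq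
    + ((x1*v2-x2*v1)^2+(x2*v0-x0*v2)^2+(x0*v1-x1*v0)^2) * hn

/-- under the planar circular-field dynamics
`ẍ = (kcf/(‖x‖²‖ẋ‖²))·(ẋ·x)·(ẋ×b)` (with `x ≠ 0`, `ẋ ≠ 0`, `b` a unit vector orthogonal
to `x` and `ẋ`), the auxiliary states `R = x·ẋ` and `S = (x×ẋ)·b` satisfy
`R' = kcf·R·S/(R²+S²) + ‖ẋ‖²` and `S' = −kcf·R²/(R²+S²)` for all `t ≥ 0`. -/
theorem auxiliary_dynamics_RS
    (kcf : ℝ) (hkcf : 0 < kcf)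
    (b : EuclideanSpace ℝ (Fin 3)) (hb : ‖b‖ = 1)
    (x v a : ℝ → EuclideanSpace ℝ (Fin 3))
    (hx : ∀ t, 0 ≤ t → HasDerivAt x (v t) t)
    (hv : ∀ t, 0 ≤ t → HasDerivAt v (a t) t)
    (hxne : ∀ t, 0 ≤ t → x t ≠ 0)
    (hvne : ∀ t, 0 ≤ t → v t ≠ 0)
    (hbx : ∀ t, 0 ≤ t → ⟪b, x t⟫ = 0)
    (hbv : ∀ t, 0 ≤ t → ⟪b, v t⟫ = 0)
    (hacc : ∀ t, 0 ≤ t →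
      a t = (kcf / (‖x t‖ ^ 2 * ‖v t‖ ^ 2) * ⟪v t, x t⟫) • cross (v t) b)
    (R S : ℝ → ℝ)
    (hR : ∀ t, R t = ⟪x t, v t⟫)
    (hS : ∀ t, S t = ⟪cross (x t) (v t), b⟫) :
    ∀ t, 0 ≤ t →
      HasDerivAt R (kcf * R t * S t / (R t ^ 2 + S t ^ 2) + ‖v t‖ ^ 2) t ∧
      HasDerivAt S (-(kcf * R t ^ 2 / (R t ^ 2 + S t ^ 2))) t := by
  intro t ht
  have hxi : ∀ i, HasDerivAt (fun s => x s i) (v t i) t := fun i => proj_deriv (hx t ht) i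
  have hvi : ∀ i, HasDerivAt (fun s => v s i) (a t i) t := fun i => proj_deriv (hv t ht) i
  have ha := hacc t ht
  set c : ℝ := kcf / (‖x t‖ ^ 2 * ‖v t‖ ^ 2) * ⟪v t, x t⟫ with hc
  have hai : ∀ i, a t i = c * cross (v t) b i := fun i => by rw [ha]; rfl
  -- scalar facts
  have hbx' : b 0 * x t 0 + b 1 * x t 1 + b 2 * x t 2 = 0 := by
    rw [← inner3]; exact hbx t ht
  have hbv' : b 0 * v t 0 + b 1 * v t 1 + b 2 * v t 2 = 0 := by
    rw [← inner3]; exact hbv t ht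
  have hb2 : b 0 ^ 2 + b 1 ^ 2 + b 2 ^ 2 = 1 := by
    rw [← norm3, hb]; norm_num
  have hRt : R t = x t 0 * v t 0 + x t 1 * v t 1 + x t 2 * v t 2 := by
    rw [hR, inner3]
  have hSt : S t = (x t 1 * v t 2 - x t 2 * v t 1) * b 0
      + (x t 2 * v t 0 - x t 0 * v t 2) * b 1
      + (x t 0 * v t 1 - x t 1 * v t 0) * b 2 := by
    rw [hS, inner3, cross_apply0, cross_apply1, cross_apply2]
  have hnx : ‖x t‖ ^ 2 = x t 0 ^ 2 + x t 1 ^ 2 + x t 2 ^ 2 := norm3 _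
  have hnv : ‖v t‖ ^ 2 = v t 0 ^ 2 + v t 1 ^ 2 + v t 2 ^ 2 := norm3 _
  have hpx : (0:ℝ) < x t 0 ^ 2 + x t 1 ^ 2 + x t 2 ^ 2 := by
    rw [← hnx]; exact pow_pos (norm_pos_iff.mpr (hxne t ht)) 2
  have hpv : (0:ℝ) < v t 0 ^ 2 + v t 1 ^ 2 + v t 2 ^ 2 := by
    rw [← hnv]; exact pow_pos (norm_pos_iff.mpr (hvne t ht)) 2
  have hkey : R t ^ 2 + S t ^ 2
      = (x t 0 ^ 2 + x t 1 ^ 2 + x t 2 ^ 2) * (v t 0 ^ 2 + v t 1 ^ 2 + v t 2 ^ 2) := by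
    rw [hRt, hSt]
    exact key3 _ _ _ _ _ _ _ _ _ hbx' hbv' hb2
  have hc2 : c = kcf * R t /
      ((x t 0 ^ 2 + x t 1 ^ 2 + x t 2 ^ 2) * (v t 0 ^ 2 + v t 1 ^ 2 + v t 2 ^ 2)) := by
    rw [hc, hnx, hnv, real_inner_comm, ← hR, div_mul_eq_mul_div]
  constructor
  · -- R'
    have hDR : HasDerivAt (fun s => x s 0 * v s 0 + x s 1 * v s 1 + x s 2 * v s 2)
        ((v t 0 * v t 0 + x t 0 * a t 0) + (v t 1 * v t 1 + x t 1 * a t 1)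
          + (v t 2 * v t 2 + x t 2 * a t 2)) t :=
      (((hxi 0).mul (hvi 0)).add ((hxi 1).mul (hvi 1))).add ((hxi 2).mul (hvi 2))
    have hRfun : R = fun s => x s 0 * v s 0 + x s 1 * v s 1 + x s 2 * v s 2 :=
      funext fun s => by rw [hR, inner3]
    have hDR' : HasDerivAt R (v t 0 * v t 0 + x t 0 * a t 0 + (v t 1 * v t 1 + x t 1 * a t 1)
        + (v t 2 * v t 2 + x t 2 * a t 2)) t := by rw [hRfun]; exact hDR
    convert hDR' using 1
    rw [hai 0, hai 1, hai 2, cross_apply0, cross_apply1, cross_apply2, hkey, hnv, hc2, hRt, hSt]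
    field_simp
    ring
  · -- S'
    have hDS : HasDerivAt (fun s =>
        (x s 1 * v s 2 - x s 2 * v s 1) * b 0 + (x s 2 * v s 0 - x s 0 * v s 2) * b 1
          + (x s 0 * v s 1 - x s 1 * v s 0) * b 2)
        (((v t 1 * v t 2 + x t 1 * a t 2) - (v t 2 * v t 1 + x t 2 * a t 1)) * b 0
          + ((v t 2 * v t 0 + x t 2 * a t 0) - (v t 0 * v t 2 + x t 0 * a t 2)) * b 1
          + ((v t 0 * v t 1 + x t 0 * a t 1) - (v t 1 * v t 0 + x t 1 * a t 0)) * b 2) t :=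
      (((((hxi 1).mul (hvi 2)).sub ((hxi 2).mul (hvi 1))).mul_const (b 0)).add
        ((((hxi 2).mul (hvi 0)).sub ((hxi 0).mul (hvi 2))).mul_const (b 1))).add
        ((((hxi 0).mul (hvi 1)).sub ((hxi 1).mul (hvi 0))).mul_const (b 2))
    have hSfun : S = fun s =>
        (x s 1 * v s 2 - x s 2 * v s 1) * b 0 + (x s 2 * v s 0 - x s 0 * v s 2) * b 1
          + (x s 0 * v s 1 - x s 1 * v s 0) * b 2 :=
      funext fun s => by rw [hS, inner3, cross_apply0, cross_apply1, cross_apply2]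
    have hDS' : HasDerivAt S
        ((v t 1 * v t 2 + x t 1 * a t 2 - (v t 2 * v t 1 + x t 2 * a t 1)) * b 0
          + (v t 2 * v t 0 + x t 2 * a t 0 - (v t 0 * v t 2 + x t 0 * a t 2)) * b 1
          + (v t 0 * v t 1 + x t 0 * a t 1 - (v t 1 * v t 0 + x t 1 * a t 0)) * b 2) t := by
      rw [hSfun]; exact hDS
    convert hDS' using 1
    have hgoal : ((v t 1 * v t 2 + x t 1 * a t 2) - (v t 2 * v t 1 + x t 2 * a t 1)) * b 0
          + ((v t 2 * v t 0 + x t 2 * a t 0) - (v t 0 * v t 2 + x t 0 * a t 2)) * b 1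
          + ((v t 0 * v t 1 + x t 0 * a t 1) - (v t 1 * v t 0 + x t 1 * a t 0)) * b 2
        = c * (-(x t 0 * v t 0 + x t 1 * v t 1 + x t 2 * v t 2)) := by
      rw [hai 0, hai 1, hai 2, cross_apply0, cross_apply1, cross_apply2]
      linear_combination (c * (b 0 * v t 0 + b 1 * v t 1 + b 2 * v t 2)) * hbx'
        + (- c * (x t 0 * v t 0 + x t 1 * v t 1 + x t 2 * v t 2)) * hb2
    rw [hgoal, hkey, hc2, ← hRt]
    field_simp
end

section
/- If R(0) ≥ 0 and (R(0), S(0)) ≠ (0, 0), then for all t ≥ 0: R(t) ≥ 0 and R(t)² + S(t)² ≥ R(0)² + S(0)²; equivalently, the barrier function V_B(t) = v²/(R(t)² + S(t)²) satisfies V_B(t) ≤ V_B(0) for all t ≥ 0. -/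
open Set Filter Topology

/-- Lemma 2 of the paper: if `R(0) ≥ 0` and `(R(0),S(0)) ≠ (0,0)`,
then `R(t) ≥ 0` and `R(t)² + S(t)² ≥ R(0)² + S(0)²` for all `t ≥ 0`; equivalently the
barrier `V_B(t) = v²/(R(t)²+S(t)²)` satisfies `V_B(t) ≤ V_B(0)`. -/
theorem cf_point_obstacle_R_nonneg
    (kcf v : ℝ) (hkcf : 0 < kcf) (hv : 0 < v)
    (R S : ℝ → ℝ)
    (hRdiff : ∀ t, 0 ≤ t → DifferentiableAt ℝ R t)
    (hSdiff : ∀ t, 0 ≤ t → DifferentiableAt ℝ S t)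
    (hR : ∀ t, 0 ≤ t → (R t, S t) ≠ (0, 0) →
      HasDerivAt R (kcf * R t * S t / (R t ^ 2 + S t ^ 2) + v ^ 2) t)
    (hS : ∀ t, 0 ≤ t → (R t, S t) ≠ (0, 0) →
      HasDerivAt S (-(kcf * R t ^ 2 / (R t ^ 2 + S t ^ 2))) t)
    (hR0 : 0 ≤ R 0) (h0 : (R 0, S 0) ≠ (0, 0)) :
    ∀ t, 0 ≤ t → 0 ≤ R t ∧ R 0 ^ 2 + S 0 ^ 2 ≤ R t ^ 2 + S t ^ 2 ∧
      v ^ 2 / (R t ^ 2 + S t ^ 2) ≤ v ^ 2 / (R 0 ^ 2 + S 0 ^ 2) := by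
  set N : ℝ → ℝ := fun t => R t ^ 2 + S t ^ 2 with hNdef
  have hpos : ∀ t, (R t, S t) ≠ (0, 0) → 0 < N t := by
    intro t h
    rcases lt_or_eq_of_le (by positivity : (0:ℝ) ≤ N t) with h' | h'
    · exact h'
    · exfalso; apply h
      simp only [hNdef] at h'
      have h1 : R t = 0 := by nlinarith [sq_nonneg (R t), sq_nonneg (S t)]
      have h2 : S t = 0 := by nlinarith [sq_nonneg (R t), sq_nonneg (S t)]
      simp [h1, h2]
  have hne : ∀ t, 0 < N t → (R t, S t) ≠ (0, 0) := by
    intro t ht h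
    rw [Prod.mk.injEq] at h
    rw [hNdef] at ht
    simp only [h.1, h.2] at ht
    norm_num at ht
  have hN0pos : 0 < N 0 := hpos 0 h0
  have hNca : ∀ t, 0 ≤ t → ContinuousAt N t := fun t ht =>
    (((hRdiff t ht).continuousAt.pow 2).add ((hSdiff t ht).continuousAt.pow 2))
  have hNderiv : ∀ t, 0 ≤ t → (R t, S t) ≠ (0, 0) →
      HasDerivAt N (2 * v ^ 2 * R t) t := by
    intro t ht hpair
    have hnz : R t ^ 2 + S t ^ 2 ≠ 0 := (hpos t hpair).ne'
    have h1 : HasDerivAt (fun s => R s ^ 2)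
        (2 * R t * (kcf * R t * S t / (R t ^ 2 + S t ^ 2) + v ^ 2)) t := by
      simpa [mul_comm] using (hR t ht hpair).fun_pow 2
    have h2 : HasDerivAt (fun s => S s ^ 2)
        (2 * S t * (-(kcf * R t ^ 2 / (R t ^ 2 + S t ^ 2)))) t := by
      simpa [mul_comm] using (hS t ht hpair).fun_pow 2
    have h3 := h1.add h2
    refine h3.congr_deriv ?_
    field_simp
    ring
  have key : ∀ b, 0 ≤ b → Icc (0:ℝ) b ⊆ {t | 0 ≤ R t ∧ N 0 ≤ N t} := by
    intro b hb
    set s : Set ℝ := {t | 0 ≤ R t ∧ N 0 ≤ N t} with hsdef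
    have hclosed : IsClosed (s ∩ Icc 0 b) := by
      have hRcont : ContinuousOn R (Icc 0 b) := fun t ht =>
        (hRdiff t ht.1).continuousAt.continuousWithinAt
      have hNcont : ContinuousOn N (Icc 0 b) := fun t ht =>
        (hNca t ht.1).continuousWithinAt
      have h1 : IsClosed (Icc (0:ℝ) b ∩ R ⁻¹' Ici 0) :=
        hRcont.preimage_isClosed_of_isClosed isClosed_Icc isClosed_Ici
      have h2 : IsClosed (Icc (0:ℝ) b ∩ N ⁻¹' Ici (N 0)) :=
        hNcont.preimage_isClosed_of_isClosed isClosed_Icc isClosed_Ici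
      have : s ∩ Icc 0 b = (Icc (0:ℝ) b ∩ R ⁻¹' Ici 0) ∩ (Icc (0:ℝ) b ∩ N ⁻¹' Ici (N 0)) := by
        ext t
        simp only [hsdef, mem_inter_iff, mem_setOf_eq, mem_preimage, mem_Ici]
        tauto
      rw [this]
      exact h1.inter h2
    have h0mem : (0:ℝ) ∈ s := ⟨hR0, le_refl _⟩
    refine hclosed.Icc_subset_of_forall_exists_gt h0mem ?_
    rintro x ⟨⟨hRx, hNx⟩, hx0, hxb⟩ y hy
    have hNxpos : 0 < N x := lt_of_lt_of_le hN0pos hNx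
    have hpairx : (R x, S x) ≠ (0, 0) := hne x hNxpos
    -- eventually N > 0 to the right
    have hNev : ∀ᶠ t in 𝓝[>] x, 0 < N t :=
      (((hNca x hx0).eventually (eventually_gt_nhds hNxpos))).filter_mono nhdsWithin_le_nhds
    -- eventually R ≥ 0 to the right
    have hRev : ∀ᶠ t in 𝓝[>] x, 0 ≤ R t := by
      rcases lt_or_eq_of_le hRx with hRxpos | hRx0
      · exact (((hRdiff x hx0).continuousAt.eventually
          (eventually_gt_nhds hRxpos))).filter_mono nhdsWithin_le_nhds |>.mono
          fun t ht => le_of_lt ht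
      · have hder := hR x hx0 hpairx
        have hdval : kcf * R x * S x / (R x ^ 2 + S x ^ 2) + v ^ 2 = v ^ 2 := by
          rw [← hRx0]; simp
        rw [hdval] at hder
        have hslope : Tendsto (slope R x) (𝓝[>] x) (𝓝 (v ^ 2)) :=
          (hasDerivAt_iff_tendsto_slope.mp hder).mono_left
            (nhdsWithin_mono x (fun t ht => ne_of_gt ht))
        have hev := hslope.eventually (eventually_gt_nhds (by positivity : (0:ℝ) < v ^ 2))
        filter_upwards [hev, self_mem_nhdsWithin] with t ht htx
        have htx' : 0 < t - x := sub_pos.mpr htx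
        rw [slope_def_field] at ht
        rcases div_pos_iff.mp ht with ⟨h5, _⟩ | ⟨_, h6⟩
        · linarith
        · linarith
    obtain ⟨u, hu, hsub⟩ := mem_nhdsGT_iff_exists_Ioc_subset.mp
      (hNev.and hRev : {t | 0 < N t ∧ 0 ≤ R t} ∈ 𝓝[>] x)
    set z := min u y with hzdef
    have hxz : x < z := lt_min hu hy
    have hIcc : ∀ t ∈ Icc x z, 0 ≤ R t ∧ 0 < N t := by
      intro t ⟨ht1, ht2⟩
      rcases eq_or_lt_of_le ht1 with rfl | ht1'
      · exact ⟨hRx, hNxpos⟩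
      · have := hsub ⟨ht1', le_trans ht2 (min_le_left _ _)⟩
        exact ⟨this.2, this.1⟩
    have hmono : MonotoneOn N (Icc x z) := by
      apply monotoneOn_of_deriv_nonneg (convex_Icc x z)
      · intro t ht
        exact (hNca t (le_trans hx0 ht.1)).continuousWithinAt
      · intro t ht
        rw [interior_Icc] at ht
        have ht' : t ∈ Icc x z := Ioo_subset_Icc_self ht
        exact (hNderiv t (le_trans hx0 ht'.1) (hne t (hIcc t ht').2)).differentiableAt.differentiableWithinAt
      · intro t ht
        rw [interior_Icc] at ht
        have ht' : t ∈ Icc x z := Ioo_subset_Icc_self ht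
        rw [(hNderiv t (le_trans hx0 ht'.1) (hne t (hIcc t ht').2)).deriv]
        have := (hIcc t ht').1
        positivity
    refine ⟨z, ⟨(hIcc z ⟨le_of_lt hxz, le_refl _⟩).1, ?_⟩, hxz, min_le_right _ _⟩
    exact le_trans hNx (hmono ⟨le_refl _, le_of_lt hxz⟩ ⟨le_of_lt hxz, le_refl _⟩ (le_of_lt hxz))
  intro t ht
  obtain ⟨h1, h2⟩ := key t ht ⟨ht, le_refl t⟩
  exact ⟨h1, h2, div_le_div_of_nonneg_left (by positivity) hN0pos h2⟩
end

section
/- If S(0) < 0, then for all t ≥ 0: S(t) ≤ S(0) (hence S(t)² ≥ S(0)² > 0) and R(t)² + S(t)² ≥ S(0)²; equivalently, the barrier function V_B(t) = v²/(R(t)² + S(t)²) satisfies V_B(t) ≤ v²/S(0)² < ∞ for all t ≥ 0. -/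
/-- Lemma 3 of the paper: if `S(0) < 0`, then `S(t) ≤ S(0)`
(hence `S(t)² ≥ S(0)² > 0`) and `R(t)² + S(t)² ≥ S(0)²` for all `t ≥ 0`; equivalently
the barrier `V_B(t) = v²/(R(t)²+S(t)²)` satisfies `V_B(t) ≤ v²/S(0)² < ∞`. -/
theorem cf_point_obstacle_S_neg
    (kcf v : ℝ) (hkcf : 0 < kcf) (hv : 0 < v)
    (R S : ℝ → ℝ)
    (hRdiff : ∀ t, 0 ≤ t → DifferentiableAt ℝ R t)
    (hSdiff : ∀ t, 0 ≤ t → DifferentiableAt ℝ S t)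
    (hR : ∀ t, 0 ≤ t → (R t, S t) ≠ (0, 0) →
      HasDerivAt R (kcf * R t * S t / (R t ^ 2 + S t ^ 2) + v ^ 2) t)
    (hS : ∀ t, 0 ≤ t → (R t, S t) ≠ (0, 0) →
      HasDerivAt S (-(kcf * R t ^ 2 / (R t ^ 2 + S t ^ 2))) t)
    (hS0 : S 0 < 0) :
    ∀ t, 0 ≤ t → S t ≤ S 0 ∧ S 0 ^ 2 ≤ S t ^ 2 ∧ S 0 ^ 2 ≤ R t ^ 2 + S t ^ 2 ∧
      v ^ 2 / (R t ^ 2 + S t ^ 2) ≤ v ^ 2 / S 0 ^ 2 := by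
  have hScont : ∀ s, 0 ≤ s → ContinuousAt S s := fun s hs => (hSdiff s hs).continuousAt
  have key : ∀ t, 0 ≤ t → S t ≤ S 0 := by
    intro t ht
    by_contra h
    push_neg at h
    set m : ℝ := (S 0 + min (S t) 0) / 2 with hm_def
    have hmin : S 0 < min (S t) 0 := lt_min h hS0
    have hm1 : S 0 < m := by simp only [hm_def]; linarith
    have hm2 : m < 0 := by
      have : min (S t) 0 ≤ 0 := min_le_right _ _
      simp only [hm_def]; linarith
    have hm3 : m < S t := by
      have : min (S t) 0 ≤ S t := min_le_left _ _
      simp only [hm_def]; linarith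
    have hScontOn : ContinuousOn S (Set.Icc 0 t) := fun s hs =>
      (hScont s hs.1).continuousWithinAt
    -- IVT: m is attained on [0, t]
    have hIVT : m ∈ S '' Set.Icc 0 t :=
      intermediate_value_Icc ht hScontOn ⟨le_of_lt hm1, le_of_lt hm3⟩
    set E : Set ℝ := Set.Icc 0 t ∩ S ⁻¹' {m} with hE_def
    have hEne : E.Nonempty := by
      obtain ⟨w, hw, hws⟩ := hIVT
      exact ⟨w, hw, by simpa using hws⟩
    have hEclosed : IsClosed E :=
      hScontOn.preimage_isClosed_of_isClosed isClosed_Icc isClosed_singleton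
    have hEbdd : BddBelow E := ⟨0, fun x hx => hx.1.1⟩
    set u : ℝ := sInf E with hu_def
    have huE : u ∈ E := hEclosed.csInf_mem hEne hEbdd
    have hu0 : 0 ≤ u := huE.1.1
    have hut : u ≤ t := huE.1.2
    have hSu : S u = m := huE.2
    -- on [0, u], S ≤ m
    have hle : ∀ s ∈ Set.Icc (0:ℝ) u, S s ≤ m := by
      intro s hs
      by_contra hgt
      push_neg at hgt
      have hScontOn' : ContinuousOn S (Set.Icc 0 s) := fun z hz =>
        (hScont z hz.1).continuousWithinAt
      have : m ∈ S '' Set.Icc 0 s :=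
        intermediate_value_Icc hs.1 hScontOn' ⟨le_of_lt hm1, le_of_lt hgt⟩
      obtain ⟨w, hw, hws⟩ := this
      have hwE : w ∈ E := ⟨⟨hw.1, le_trans hw.2 (le_trans hs.2 hut)⟩, hws⟩
      have huw : u ≤ w := csInf_le hEbdd hwE
      have hws' : w = s := le_antisymm hw.2 (hs.2.trans huw)
      rw [hws'] at hws
      exact absurd hws (ne_of_gt hgt)
    -- S is negative on [0, u], so derivative exists and is ≤ 0
    have hneg : ∀ s ∈ Set.Icc (0:ℝ) u, S s < 0 := fun s hs =>
      lt_of_le_of_lt (hle s hs) hm2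
    have hderiv : ∀ s ∈ Set.Icc (0:ℝ) u,
        HasDerivAt S (-(kcf * R s ^ 2 / (R s ^ 2 + S s ^ 2))) s := by
      intro s hs
      apply hS s hs.1
      intro hpair
      have : S s = 0 := (Prod.mk.injEq _ _ _ _ ▸ hpair).2
      exact absurd this (ne_of_lt (hneg s hs))
    have hanti : AntitoneOn S (Set.Icc 0 u) := by
      apply antitoneOn_of_deriv_nonpos (convex_Icc 0 u)
      · exact fun s hs => ((hderiv s hs).differentiableAt).continuousAt.continuousWithinAt
      · intro s hs
        rw [interior_Icc] at hs
        exact ((hderiv s ⟨le_of_lt hs.1, le_of_lt hs.2⟩).differentiableAt).differentiableWithinAt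
      · intro s hs
        rw [interior_Icc] at hs
        have hs' : s ∈ Set.Icc (0:ℝ) u := ⟨le_of_lt hs.1, le_of_lt hs.2⟩
        rw [(hderiv s hs').deriv]
        have hSsne : S s < 0 := hneg s hs'
        have hs2 : 0 < S s ^ 2 := by nlinarith
        have hden : 0 < R s ^ 2 + S s ^ 2 := by nlinarith [sq_nonneg (R s)]
        have : 0 ≤ kcf * R s ^ 2 / (R s ^ 2 + S s ^ 2) := by positivity
        linarith
    have : S u ≤ S 0 := hanti (Set.left_mem_Icc.mpr hu0) (Set.right_mem_Icc.mpr hu0) hu0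
    rw [hSu] at this
    linarith
  intro t ht
  have h1 : S t ≤ S 0 := key t ht
  have h2 : S 0 ^ 2 ≤ S t ^ 2 := by nlinarith
  have h3 : S 0 ^ 2 ≤ R t ^ 2 + S t ^ 2 := by nlinarith [sq_nonneg (R t)]
  refine ⟨h1, h2, h3, ?_⟩
  have hS02 : 0 < S 0 ^ 2 := by nlinarith
  exact div_le_div_of_nonneg_left (by positivity) hS02 h3
end

section
/- At every t ≥ 0 with (R(t), S(t)) ≠ (0, 0), the distance ε(t) = S(t) + c·R(t) to the collision ray satisfies ε'(t) = kcf·S(t)·ε(t)/(R(t)² + S(t)²). In particular, if ε(t₀) = 0 and (R(t), S(t)) ≠ (0,0) on [t₀, t₁], then ε(t) = 0 for all t ∈ [t₀, t₁] (the collision ray is positively invariant). -/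
/-- the distance `ε = S + c·R` to the collision ray (with `c = kcf/v²`)
satisfies `ε' = kcf·S·ε/(R²+S²)` along the auxiliary dynamics; in particular the collision
ray `ε = 0` is positively invariant as long as no collision `(R,S) = (0,0)` occurs. -/
theorem cf_collision_ray_dynamics_and_invariance
    (kcf v c : ℝ) (hkcf : 0 < kcf) (hv : 0 < v) (hc : c = kcf / v ^ 2)
    (R S : ℝ → ℝ)
    (hRdiff : ∀ t, 0 ≤ t → DifferentiableAt ℝ R t)
    (hSdiff : ∀ t, 0 ≤ t → DifferentiableAt ℝ S t)
    (hR : ∀ t, 0 ≤ t → (R t, S t) ≠ (0, 0) →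
      HasDerivAt R (kcf * R t * S t / (R t ^ 2 + S t ^ 2) + v ^ 2) t)
    (hS : ∀ t, 0 ≤ t → (R t, S t) ≠ (0, 0) →
      HasDerivAt S (-(kcf * R t ^ 2 / (R t ^ 2 + S t ^ 2))) t) :
    (∀ t, 0 ≤ t → (R t, S t) ≠ (0, 0) →
      HasDerivAt (fun s => S s + c * R s)
        (kcf * S t * (S t + c * R t) / (R t ^ 2 + S t ^ 2)) t) ∧
    (∀ t₀ t₁ : ℝ, 0 ≤ t₀ → t₀ ≤ t₁ → S t₀ + c * R t₀ = 0 →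
      (∀ t ∈ Set.Icc t₀ t₁, (R t, S t) ≠ (0, 0)) →
      ∀ t ∈ Set.Icc t₀ t₁, S t + c * R t = 0) := by
  have hv2 : v ^ 2 ≠ 0 := by positivity
  have hden : ∀ t, (R t, S t) ≠ (0, 0) → 0 < R t ^ 2 + S t ^ 2 := by
    intro t h
    rcases eq_or_lt_of_le (by positivity : (0:ℝ) ≤ R t ^ 2 + S t ^ 2) with h0 | h0
    · exfalso
      have h1 : R t ^ 2 = 0 ∧ S t ^ 2 = 0 :=
        (add_eq_zero_iff_of_nonneg (sq_nonneg _) (sq_nonneg _)).mp h0.symm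
      exact h (by rw [pow_eq_zero_iff two_ne_zero |>.mp h1.1,
        pow_eq_zero_iff two_ne_zero |>.mp h1.2])
    · exact h0
  have key : ∀ t, 0 ≤ t → (R t, S t) ≠ (0, 0) →
      HasDerivAt (fun s => S s + c * R s)
        (kcf * S t * (S t + c * R t) / (R t ^ 2 + S t ^ 2)) t := by
    intro t ht hne
    have h : HasDerivAt (fun s => S s + c * R s) _ t := (hS t ht hne).add ((hR t ht hne).const_mul c)
    convert h using 1
    have hd := (hden t hne).ne'
    subst hc
    field_simp
    ring
  refine ⟨key, ?_⟩
  intro t₀ t₁ ht₀ hle hε0 hno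
  -- continuity and boundedness of the coefficient g = kcf * S / (R² + S²)
  set g : ℝ → ℝ := fun t => kcf * S t / (R t ^ 2 + S t ^ 2) with hg
  have hcont : ContinuousOn g (Set.Icc t₀ t₁) := by
    intro t ht
    have ht' : 0 ≤ t := le_trans ht₀ ht.1
    have hRc := (hRdiff t ht').continuousAt
    have hSc := (hSdiff t ht').continuousAt
    have hdne := (hden t (hno t ht)).ne'
    exact ((continuousAt_const.mul hSc).div
      ((hRc.pow 2).add (hSc.pow 2)) hdne).continuousWithinAt
  obtain ⟨K, hK⟩ := (isCompact_Icc : IsCompact (Set.Icc t₀ t₁)).exists_bound_of_continuousOn hcont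
  have hεcont : ContinuousOn (fun s => S s + c * R s) (Set.Icc t₀ t₁) := by
    intro t ht
    have ht' : 0 ≤ t := le_trans ht₀ ht.1
    exact ((hSdiff t ht').continuousAt.add
      ((hRdiff t ht').continuousAt.const_mul c)).continuousWithinAt
  have hder : ∀ t ∈ Set.Ico t₀ t₁,
      HasDerivWithinAt (fun s => S s + c * R s) (g t * (S t + c * R t)) (Set.Ici t) t := by
    intro t ht
    have ht' : 0 ≤ t := le_trans ht₀ ht.1
    have := key t ht' (hno t ⟨ht.1, ht.2.le⟩)
    have heq : kcf * S t * (S t + c * R t) / (R t ^ 2 + S t ^ 2)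
        = g t * (S t + c * R t) := by rw [hg]; ring
    exact (heq ▸ this).hasDerivWithinAt
  have bound : ∀ t ∈ Set.Ico t₀ t₁,
      ‖g t * (S t + c * R t)‖ ≤ K * ‖S t + c * R t‖ + 0 := by
    intro t ht
    rw [norm_mul, add_zero]
    exact mul_le_mul_of_nonneg_right (hK t ⟨ht.1, ht.2.le⟩) (norm_nonneg _)
  have := norm_le_gronwallBound_of_norm_deriv_right_le (δ := 0) hεcont hder
    (by simp [hε0]) bound
  intro t ht
  have h := this t ht
  rw [gronwallBound_ε0_δ0] at h
  simpa using le_antisymm h (norm_nonneg _)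
end

section
/- Let τ > 0 and suppose S(t) ≥ 0 and (R(t), S(t)) ≠ (0, 0) for all t ∈ [0, τ]. Then t ↦ |ε(t)| is nondecreasing on [0, τ]; in particular |ε(t)| ≥ |ε(0)| for all t ∈ [0, τ]. -/
/-- if `S(t) ≥ 0` and no collision occurs on `[0, τ]`, then the distance
`|ε| = |S + c·R|` to the collision ray (with `c = kcf/v²`) is nondecreasing on `[0, τ]`;
in particular `|ε(t)| ≥ |ε(0)|` on `[0, τ]`. -/
theorem cf_eps_abs_nondecreasing
    (kcf v c : ℝ) (hkcf : 0 < kcf) (hv : 0 < v) (hc : c = kcf / v ^ 2)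
    (R S : ℝ → ℝ)
    (hRdiff : ∀ t, 0 ≤ t → DifferentiableAt ℝ R t)
    (hSdiff : ∀ t, 0 ≤ t → DifferentiableAt ℝ S t)
    (hR : ∀ t, 0 ≤ t → (R t, S t) ≠ (0, 0) →
      HasDerivAt R (kcf * R t * S t / (R t ^ 2 + S t ^ 2) + v ^ 2) t)
    (hS : ∀ t, 0 ≤ t → (R t, S t) ≠ (0, 0) →
      HasDerivAt S (-(kcf * R t ^ 2 / (R t ^ 2 + S t ^ 2))) t)
    (τ : ℝ) (hτ : 0 < τ)
    (hSnonneg : ∀ t ∈ Set.Icc (0 : ℝ) τ, 0 ≤ S t)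
    (hnocoll : ∀ t ∈ Set.Icc (0 : ℝ) τ, (R t, S t) ≠ (0, 0)) :
    MonotoneOn (fun t => |S t + c * R t|) (Set.Icc (0 : ℝ) τ) ∧
    ∀ t ∈ Set.Icc (0 : ℝ) τ, |S 0 + c * R 0| ≤ |S t + c * R t| := by
  set f : ℝ → ℝ := fun t => (S t + c * R t) ^ 2 with hf
  have hDpos : ∀ t ∈ Set.Icc (0 : ℝ) τ, 0 < R t ^ 2 + S t ^ 2 := by
    intro t ht
    have h : R t ≠ 0 ∨ S t ≠ 0 := by
      by_contra hcon
      push_neg at hcon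
      exact hnocoll t ht (by simp [Prod.ext_iff, hcon.1, hcon.2])
    rcases h with h | h
    · have := pow_two_pos_of_ne_zero h
      nlinarith [sq_nonneg (S t)]
    · have := pow_two_pos_of_ne_zero h
      nlinarith [sq_nonneg (R t)]
  have key : ∀ t ∈ Set.Icc (0 : ℝ) τ,
      HasDerivAt f (2 * kcf * S t * (S t + c * R t) ^ 2 / (R t ^ 2 + S t ^ 2)) t := by
    intro t ht
    have hRt := hR t ht.1 (hnocoll t ht)
    have hSt := hS t ht.1 (hnocoll t ht)
    have hε : HasDerivAt (fun t => S t + c * R t)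
        (-(kcf * R t ^ 2 / (R t ^ 2 + S t ^ 2))
          + c * (kcf * R t * S t / (R t ^ 2 + S t ^ 2) + v ^ 2)) t :=
      hSt.add (hRt.const_mul c)
    have := hε.fun_pow 2
    refine this.congr_deriv ?_
    have hD := (hDpos t ht).ne'
    have hv2 : v ^ 2 ≠ 0 := by positivity
    rw [hc]
    field_simp
    ring_nf
    field_simp
    ring
  have hmono : MonotoneOn f (Set.Icc 0 τ) := by
    apply monotoneOn_of_deriv_nonneg (convex_Icc 0 τ)
    · exact fun t ht => (key t ht).differentiableAt.continuousAt.continuousWithinAt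
    · intro t ht
      rw [interior_Icc] at ht
      exact (key t (Set.mem_Icc_of_Ioo ht)).differentiableAt.differentiableWithinAt
    · intro t ht
      rw [interior_Icc] at ht
      have ht' := Set.mem_Icc_of_Ioo ht
      rw [(key t ht').deriv]
      have := hSnonneg t ht'
      have := hDpos t ht'
      positivity
  have habs : MonotoneOn (fun t => |S t + c * R t|) (Set.Icc (0 : ℝ) τ) := by
    intro a ha b hb hab
    have := hmono ha hb hab
    have h2 := Real.sqrt_le_sqrt this
    simpa [hf, Real.sqrt_sq_eq_abs] using h2
  exact ⟨habs, fun t ht => habs (Set.left_mem_Icc.mpr hτ.le) ht ht.1⟩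
end

section
/- Suppose R(0) < 0, S(0) > 0 and ε(0) ≠ 0. Then there exists a time τ > 0 such that R(τ) = 0 or S(τ) = 0, and for all t ∈ [0, τ]: |ε(t)| ≥ |ε(0)| and R(t)² + S(t)² ≥ ε(0)²/max(c, 1)². In particular (R(t), S(t)) ≠ (0, 0) on [0, τ], i.e., no collision occurs; in terms of the robot this gives ‖x(t)‖ = √(R(t)²+S(t)²)/v ≥ |ε(0)|/(max(c,1)·v). -/
open Set

private lemma escape_aux (f : ℝ → ℝ) (δ : ℝ) (hδ : 0 < δ)
    (hf' : ∀ t ∈ Set.Ioi (0:ℝ), ∃ d, HasDerivAt f d t ∧ δ ≤ d)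
    (hfc : ContinuousOn f (Set.Ici 0))
    (hneg : ∀ t, 0 ≤ t → f t < 0) : False := by
  set T : ℝ := (1 - f 0) / δ with hT
  have hf00 : f 0 < 0 := hneg 0 le_rfl
  have hT0 : 0 < T := div_pos (by linarith) hδ
  have hg : MonotoneOn (fun t => f t - δ * t) (Set.Ici 0) := by
    apply monotoneOn_of_deriv_nonneg (convex_Ici 0)
    · exact hfc.sub ((continuous_const.mul continuous_id).continuousOn)
    · intro x hx
      rw [interior_Ici] at hx
      obtain ⟨d, hd, _⟩ := hf' x hx
      exact ((hd.sub ((hasDerivAt_id x).const_mul δ)).differentiableAt).differentiableWithinAt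
    · intro x hx
      rw [interior_Ici] at hx
      obtain ⟨d, hd, hdδ⟩ := hf' x hx
      have hgd : HasDerivAt (fun t => f t - δ * t) (d - δ * 1) x :=
        hd.sub ((hasDerivAt_id x).const_mul δ)
      rw [hgd.deriv]
      linarith
  have h1 := hg (self_mem_Ici) (mem_Ici.mpr hT0.le) hT0.le
  have h2 := hneg T hT0.le
  have h3 : δ * T = 1 - f 0 := by
    rw [hT]; field_simp
  simp only [mul_zero, sub_zero] at h1
  linarith

private lemma mono_helper (kcf v c : ℝ) (hkcf : 0 < kcf) (hv : 0 < v) (hc : c = kcf / v ^ 2)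
    (R S : ℝ → ℝ)
    (hRdiff : ∀ t, 0 ≤ t → DifferentiableAt ℝ R t)
    (hSdiff : ∀ t, 0 ≤ t → DifferentiableAt ℝ S t)
    (hR : ∀ t, 0 ≤ t → (R t, S t) ≠ (0, 0) →
      HasDerivAt R (kcf * R t * S t / (R t ^ 2 + S t ^ 2) + v ^ 2) t)
    (hS : ∀ t, 0 ≤ t → (R t, S t) ≠ (0, 0) →
      HasDerivAt S (-(kcf * R t ^ 2 / (R t ^ 2 + S t ^ 2))) t)
    (b : ℝ) (hb : 0 < b)
    (hquad : ∀ t ∈ Set.Ioo (0:ℝ) b, R t < 0 ∧ 0 < S t) :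
    ∀ t ∈ Set.Icc (0:ℝ) b,
      (S 0 + c * R 0) ^ 2 ≤ (S t + c * R t) ^ 2 ∧
      R t ^ 2 + S t ^ 2 ≤ R 0 ^ 2 + S 0 ^ 2 := by
  have hRc : ContinuousOn R (Set.Icc 0 b) := fun t ht =>
    ((hRdiff t ht.1).continuousAt).continuousWithinAt
  have hSc : ContinuousOn S (Set.Icc 0 b) := fun t ht =>
    ((hSdiff t ht.1).continuousAt).continuousWithinAt
  -- pointwise facts on the interior
  have key : ∀ x ∈ Set.Ioo (0:ℝ) b,
      HasDerivAt (fun t => (S t + c * R t) ^ 2)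
        (2 * kcf * S x * (S x + c * R x) ^ 2 / (R x ^ 2 + S x ^ 2)) x ∧
      HasDerivAt (fun t => R t ^ 2 + S t ^ 2) (2 * v ^ 2 * R x) x := by
    intro x hx
    obtain ⟨hRx, hSx⟩ := hquad x hx
    have hNx : 0 < R x ^ 2 + S x ^ 2 := by nlinarith
    have hne : (R x, S x) ≠ (0, 0) := by
      intro h
      rw [Prod.mk.injEq] at h
      exact hRx.ne h.1
    have hR' := hR x hx.1.le hne
    have hS' := hS x hx.1.le hne
    constructor
    · have h := (hS'.add (hR'.const_mul c)).pow 2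
      refine h.congr_deriv ?_
      simp only [Pi.add_apply]
      rw [hc]
      norm_num
      field_simp
      ring
    · have h := (hR'.pow 2).add (hS'.pow 2)
      refine h.congr_deriv ?_
      field_simp
      ring
  have hmonoE : MonotoneOn (fun t => (S t + c * R t) ^ 2) (Set.Icc 0 b) := by
    apply monotoneOn_of_deriv_nonneg (convex_Icc 0 b)
    · exact (hSc.add (continuousOn_const.mul hRc)).pow 2
    · intro x hx
      rw [interior_Icc] at hx
      exact ((key x hx).1.differentiableAt).differentiableWithinAt
    · intro x hx
      rw [interior_Icc] at hx
      obtain ⟨hRx, hSx⟩ := hquad x hx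
      have hNx : 0 < R x ^ 2 + S x ^ 2 := by nlinarith
      rw [(key x hx).1.deriv]
      apply div_nonneg _ hNx.le
      exact mul_nonneg (mul_nonneg (by linarith) hSx.le) (sq_nonneg _)
  have hantiN : AntitoneOn (fun t => R t ^ 2 + S t ^ 2) (Set.Icc 0 b) := by
    apply antitoneOn_of_deriv_nonpos (convex_Icc 0 b)
    · exact (hRc.pow 2).add (hSc.pow 2)
    · intro x hx
      rw [interior_Icc] at hx
      exact ((key x hx).2.differentiableAt).differentiableWithinAt
    · intro x hx
      rw [interior_Icc] at hx
      obtain ⟨hRx, hSx⟩ := hquad x hx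
      rw [(key x hx).2.deriv]
      nlinarith
  intro t ht
  exact ⟨hmonoE (Set.left_mem_Icc.mpr hb.le) ht ht.1,
    hantiN (Set.left_mem_Icc.mpr hb.le) ht ht.1⟩

private lemma escape (kcf v c : ℝ) (hkcf : 0 < kcf) (hv : 0 < v) (hc : c = kcf / v ^ 2)
    (R S : ℝ → ℝ)
    (hRdiff : ∀ t, 0 ≤ t → DifferentiableAt ℝ R t)
    (hSdiff : ∀ t, 0 ≤ t → DifferentiableAt ℝ S t)
    (hR : ∀ t, 0 ≤ t → (R t, S t) ≠ (0, 0) →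
      HasDerivAt R (kcf * R t * S t / (R t ^ 2 + S t ^ 2) + v ^ 2) t)
    (hS : ∀ t, 0 ≤ t → (R t, S t) ≠ (0, 0) →
      HasDerivAt S (-(kcf * R t ^ 2 / (R t ^ 2 + S t ^ 2))) t)
    (hR0 : R 0 < 0) (hS0 : 0 < S 0) (heps0 : S 0 + c * R 0 ≠ 0) :
    ∃ t : ℝ, 0 < t ∧ (R t = 0 ∨ S t = 0) := by
  by_contra hcon
  push_neg at hcon
  -- hcon : ∀ t, 0 < t → R t ≠ 0 ∧ S t ≠ 0
  have hcon' : ∀ t : ℝ, 0 < t → R t ≠ 0 ∧ S t ≠ 0 := hcon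
  have hRc : ∀ b : ℝ, ContinuousOn R (Set.Icc 0 b) := fun b t ht =>
    ((hRdiff t ht.1).continuousAt).continuousWithinAt
  have hSc : ∀ b : ℝ, ContinuousOn S (Set.Icc 0 b) := fun b t ht =>
    ((hSdiff t ht.1).continuousAt).continuousWithinAt
  have hRneg : ∀ t : ℝ, 0 ≤ t → R t < 0 := by
    intro t ht
    rcases ht.eq_or_lt with h | h
    · rwa [← h]
    by_contra hge
    push_neg at hge
    have hgt : 0 < R t := lt_of_le_of_ne hge (Ne.symm (hcon' t h).1)
    have hiv := intermediate_value_Icc h.le (hRc t)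
    have h0 : (0:ℝ) ∈ Set.Icc (R 0) (R t) := ⟨hR0.le, hgt.le⟩
    obtain ⟨s, hs, hRs⟩ := hiv h0
    have hspos : 0 < s := by
      rcases hs.1.eq_or_lt with h' | h'
      · rw [← h'] at hRs; exact absurd hRs hR0.ne
      · exact h'
    exact (hcon' s hspos).1 hRs
  have hSpos : ∀ t : ℝ, 0 ≤ t → 0 < S t := by
    intro t ht
    rcases ht.eq_or_lt with h | h
    · rwa [← h]
    by_contra hge
    push_neg at hge
    have hlt : S t < 0 := lt_of_le_of_ne hge (hcon' t h).2
    have hiv := intermediate_value_Icc' h.le (hSc t)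
    have h0 : (0:ℝ) ∈ Set.Icc (S t) (S 0) := ⟨hlt.le, hS0.le⟩
    obtain ⟨s, hs, hSs⟩ := hiv h0
    have hspos : 0 < s := by
      rcases hs.1.eq_or_lt with h' | h'
      · rw [← h'] at hSs; exact absurd hSs hS0.ne'
      · exact h'
    exact (hcon' s hspos).2 hSs
  -- bounds from mono_helper
  have hmono : ∀ t : ℝ, 0 ≤ t →
      (S 0 + c * R 0) ^ 2 ≤ (S t + c * R t) ^ 2 ∧
      R t ^ 2 + S t ^ 2 ≤ R 0 ^ 2 + S 0 ^ 2 := by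
    intro t ht
    rcases ht.eq_or_lt with h | h
    · rw [← h]; exact ⟨le_rfl, le_rfl⟩
    exact mono_helper kcf v c hkcf hv hc R S hRdiff hSdiff hR hS t h
      (fun s hs => ⟨hRneg s hs.1.le, hSpos s hs.1.le⟩) t ⟨ht, le_rfl⟩
  have hN0 : 0 < R 0 ^ 2 + S 0 ^ 2 := by nlinarith
  have heps2 : 0 < (S 0 + c * R 0) ^ 2 :=
    lt_of_le_of_ne (sq_nonneg _) (Ne.symm (pow_ne_zero 2 heps0))
  have hene : ∀ t : ℝ, 0 ≤ t → S t + c * R t ≠ 0 := by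
    intro t ht h0
    have := (hmono t ht).1
    rw [h0] at this
    nlinarith
  have hecont : ∀ b : ℝ, ContinuousOn (fun t => S t + c * R t) (Set.Icc 0 b) :=
    fun b => (hSc b).add (continuousOn_const.mul (hRc b))
  rcases heps0.lt_or_gt with hε | hε
  · -- ε0 < 0 : use S/R
    have hesign : ∀ t : ℝ, 0 ≤ t → S t + c * R t < 0 := by
      intro t ht
      rcases ht.eq_or_lt with h | h
      · rw [← h]; exact hε
      by_contra hge
      push_neg at hge
      have hgt : 0 < S t + c * R t := lt_of_le_of_ne hge (Ne.symm (hene t h.le))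
      have hiv := intermediate_value_Icc h.le (hecont t)
      obtain ⟨s, hs, hes⟩ := hiv ⟨hε.le, hgt.le⟩
      exact hene s hs.1 hes
    have hele : ∀ t : ℝ, 0 ≤ t → S t + c * R t ≤ S 0 + c * R 0 := by
      intro t ht
      have h1 := (hmono t ht).1
      have h2 := hesign t ht
      nlinarith
    apply escape_aux (fun t => S t / R t)
      (v ^ 2 * (-(S 0 + c * R 0)) / (R 0 ^ 2 + S 0 ^ 2))
      (div_pos (mul_pos (pow_pos hv 2) (by linarith)) hN0)
    · intro t ht
      have ht' : (0:ℝ) ≤ t := (le_of_lt ht)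
      have hRt := hRneg t ht'
      have hSt := hSpos t ht'
      have hNt : 0 < R t ^ 2 + S t ^ 2 := by nlinarith
      have hne : (R t, S t) ≠ (0, 0) := by
        intro h; rw [Prod.mk.injEq] at h; exact hRt.ne h.1
      have hR' := hR t ht' hne
      have hS' := hS t ht' hne
      refine ⟨_, hS'.div hR' hRt.ne, ?_⟩
      have heq : (-(kcf * R t ^ 2 / (R t ^ 2 + S t ^ 2)) * R t -
          S t * (kcf * R t * S t / (R t ^ 2 + S t ^ 2) + v ^ 2)) / R t ^ 2
          = v ^ 2 * (-(S t + c * R t)) / R t ^ 2 := by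
        rw [hc]
        field_simp [hNt.ne', hRt.ne, hv.ne']
        ring
      rw [heq]
      have hRsq : 0 < R t ^ 2 := by nlinarith
      rw [div_le_div_iff₀ hN0 hRsq]
      have hee := hele t ht'
      have hNle := (hmono t ht').2
      have hRN : R t ^ 2 ≤ R 0 ^ 2 + S 0 ^ 2 := by nlinarith
      have het := hesign t ht'
      calc v ^ 2 * (-(S 0 + c * R 0)) * R t ^ 2
          ≤ v ^ 2 * (-(S t + c * R t)) * R t ^ 2 := by
            apply mul_le_mul_of_nonneg_right _ (sq_nonneg (R t))
            apply mul_le_mul_of_nonneg_left (by linarith) (sq_nonneg v)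
        _ ≤ v ^ 2 * (-(S t + c * R t)) * (R 0 ^ 2 + S 0 ^ 2) := by
            apply mul_le_mul_of_nonneg_left hRN
            exact mul_nonneg (sq_nonneg v) (by linarith)
    · apply ContinuousOn.div
      · exact fun t ht => ((hSdiff t ht).continuousAt).continuousWithinAt
      · exact fun t ht => ((hRdiff t ht).continuousAt).continuousWithinAt
      · exact fun t ht => (hRneg t ht).ne
    · exact fun t ht => div_neg_of_pos_of_neg (hSpos t ht) (hRneg t ht)
  · -- ε0 > 0 : use R/S
    have hesign : ∀ t : ℝ, 0 ≤ t → 0 < S t + c * R t := by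
      intro t ht
      rcases ht.eq_or_lt with h | h
      · rw [← h]; exact hε
      by_contra hge
      push_neg at hge
      have hlt : S t + c * R t < 0 := lt_of_le_of_ne hge (hene t h.le)
      have hiv := intermediate_value_Icc' h.le (hecont t)
      obtain ⟨s, hs, hes⟩ := hiv ⟨hlt.le, hε.le⟩
      exact hene s hs.1 hes
    have hele : ∀ t : ℝ, 0 ≤ t → S 0 + c * R 0 ≤ S t + c * R t := by
      intro t ht
      have h1 := (hmono t ht).1
      have h2 := hesign t ht
      nlinarith
    apply escape_aux (fun t => R t / S t)
      (v ^ 2 * (S 0 + c * R 0) / (R 0 ^ 2 + S 0 ^ 2))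
      (div_pos (mul_pos (pow_pos hv 2) hε) hN0)
    · intro t ht
      have ht' : (0:ℝ) ≤ t := (le_of_lt ht)
      have hRt := hRneg t ht'
      have hSt := hSpos t ht'
      have hNt : 0 < R t ^ 2 + S t ^ 2 := by nlinarith
      have hne : (R t, S t) ≠ (0, 0) := by
        intro h; rw [Prod.mk.injEq] at h; exact hRt.ne h.1
      have hR' := hR t ht' hne
      have hS' := hS t ht' hne
      refine ⟨_, hR'.div hS' hSt.ne', ?_⟩
      have heq : ((kcf * R t * S t / (R t ^ 2 + S t ^ 2) + v ^ 2) * S t -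
          R t * -(kcf * R t ^ 2 / (R t ^ 2 + S t ^ 2))) / S t ^ 2
          = v ^ 2 * (S t + c * R t) / S t ^ 2 := by
        rw [hc]
        field_simp [hNt.ne', hSt.ne', hv.ne']
        ring
      rw [heq]
      have hSsq : 0 < S t ^ 2 := by nlinarith
      rw [div_le_div_iff₀ hN0 hSsq]
      have hee := hele t ht'
      have hNle := (hmono t ht').2
      have hSN : S t ^ 2 ≤ R 0 ^ 2 + S 0 ^ 2 := by nlinarith
      have het := hesign t ht'
      calc v ^ 2 * (S 0 + c * R 0) * S t ^ 2
          ≤ v ^ 2 * (S t + c * R t) * S t ^ 2 := by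
            apply mul_le_mul_of_nonneg_right _ (sq_nonneg (S t))
            apply mul_le_mul_of_nonneg_left hee (sq_nonneg v)
        _ ≤ v ^ 2 * (S t + c * R t) * (R 0 ^ 2 + S 0 ^ 2) := by
            apply mul_le_mul_of_nonneg_left hSN
            exact mul_nonneg (sq_nonneg v) (by linarith)
    · apply ContinuousOn.div
      · exact fun t ht => ((hRdiff t ht).continuousAt).continuousWithinAt
      · exact fun t ht => ((hSdiff t ht).continuousAt).continuousWithinAt
      · exact fun t ht => (hSpos t ht).ne'
    · exact fun t ht => div_neg_of_neg_of_pos (hRneg t ht) (hSpos t ht)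

/-- Lemma 4 of the paper, collision-free part: if `R(0) < 0`, `S(0) > 0`
and `ε(0) = S(0) + c·R(0) ≠ 0` (with `c = kcf/v²`), then there is a time `τ > 0` with
`R(τ) = 0` or `S(τ) = 0`, and on `[0, τ]` one has `|ε(t)| ≥ |ε(0)|` and
`R(t)² + S(t)² ≥ ε(0)²/max(c,1)²`; in particular `(R(t),S(t)) ≠ (0,0)`, i.e. no collision
occurs (in terms of the robot, `‖x(t)‖ = √(R²+S²)/v ≥ |ε(0)|/(max(c,1)·v)`). -/
theorem cf_critical_quadrant_no_collision
    (kcf v c : ℝ) (hkcf : 0 < kcf) (hv : 0 < v) (hc : c = kcf / v ^ 2)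
    (R S : ℝ → ℝ)
    (hRdiff : ∀ t, 0 ≤ t → DifferentiableAt ℝ R t)
    (hSdiff : ∀ t, 0 ≤ t → DifferentiableAt ℝ S t)
    (hR : ∀ t, 0 ≤ t → (R t, S t) ≠ (0, 0) →
      HasDerivAt R (kcf * R t * S t / (R t ^ 2 + S t ^ 2) + v ^ 2) t)
    (hS : ∀ t, 0 ≤ t → (R t, S t) ≠ (0, 0) →
      HasDerivAt S (-(kcf * R t ^ 2 / (R t ^ 2 + S t ^ 2))) t)
    (hR0 : R 0 < 0) (hS0 : 0 < S 0) (heps0 : S 0 + c * R 0 ≠ 0) :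
    ∃ τ : ℝ, 0 < τ ∧ (R τ = 0 ∨ S τ = 0) ∧
      ∀ t ∈ Set.Icc (0 : ℝ) τ,
        |S 0 + c * R 0| ≤ |S t + c * R t| ∧
        (S 0 + c * R 0) ^ 2 / (max c 1) ^ 2 ≤ R t ^ 2 + S t ^ 2 ∧
        (R t, S t) ≠ (0, 0) := by
  obtain ⟨t1, ht1, hax1⟩ := escape kcf v c hkcf hv hc R S hRdiff hSdiff hR hS hR0 hS0 heps0
  set A : Set ℝ := {t | 0 ≤ t ∧ R t * S t = 0} with hA
  have ht1A : t1 ∈ A := ⟨ht1.le, by rcases hax1 with h | h <;> simp [h]⟩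
  have hAne : A.Nonempty := ⟨t1, ht1A⟩
  have hAbdd : BddBelow A := ⟨0, fun a ha => ha.1⟩
  have hAclosed : IsClosed A := by
    rw [← isOpen_compl_iff, isOpen_iff_mem_nhds]
    intro x hx
    rcases lt_or_ge x 0 with hx0 | hx0
    · exact Filter.mem_of_superset (Iio_mem_nhds hx0)
        (fun y hy hyA => absurd hyA.1 (not_le.mpr hy))
    · have hxne : R x * S x ≠ 0 := fun h => hx ⟨hx0, h⟩
      have hcont : ContinuousAt (fun t => R t * S t) x :=
        ((hRdiff x hx0).continuousAt).mul ((hSdiff x hx0).continuousAt)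
      have := hcont.eventually_ne hxne
      exact this.mono (fun y hy hyA => hy hyA.2)
  set τ := sInf A with hτ
  have hτA : τ ∈ A := hAclosed.csInf_mem hAne hAbdd
  have hτ0 : 0 ≤ τ := hτA.1
  -- τ > 0
  have hτpos : 0 < τ := by
    have hRct : ContinuousAt R 0 := (hRdiff 0 le_rfl).continuousAt
    have hSct : ContinuousAt S 0 := (hSdiff 0 le_rfl).continuousAt
    have hev : ∀ᶠ y in nhds (0:ℝ), R y < 0 ∧ 0 < S y :=
      (hRct.eventually_lt_const hR0).and (hSct.eventually_const_lt hS0)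
    obtain ⟨δ, hδpos, hδ⟩ := Metric.eventually_nhds_iff.mp hev
    have hlb : ∀ a ∈ A, δ ≤ a := by
      intro a ha
      by_contra hlt
      push_neg at hlt
      have : dist a 0 < δ := by
        rw [Real.dist_eq, sub_zero, abs_of_nonneg ha.1]; exact hlt
      obtain ⟨h1, h2⟩ := hδ this
      have : R a * S a < 0 := mul_neg_of_neg_of_pos h1 h2
      exact this.ne ha.2
    exact lt_of_lt_of_le hδpos (le_csInf hAne hlb)
  -- strict quadrant before τ
  have hquad : ∀ t : ℝ, 0 ≤ t → t < τ → R t < 0 ∧ 0 < S t := by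
    intro t ht htτ
    have hnotA : ∀ s : ℝ, 0 ≤ s → s ≤ t → R s * S s ≠ 0 := by
      intro s hs hst h0
      have : τ ≤ s := csInf_le hAbdd ⟨hs, h0⟩
      linarith
    have hRc : ContinuousOn R (Set.Icc 0 t) := fun s hs =>
      ((hRdiff s hs.1).continuousAt).continuousWithinAt
    have hSc : ContinuousOn S (Set.Icc 0 t) := fun s hs =>
      ((hSdiff s hs.1).continuousAt).continuousWithinAt
    constructor
    · by_contra hge
      push_neg at hge
      have hne : R t ≠ 0 := fun h => hnotA t ht le_rfl (by rw [h]; ring)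
      have hgt : 0 < R t := lt_of_le_of_ne hge (Ne.symm hne)
      obtain ⟨s, hs, hRs⟩ := intermediate_value_Icc ht hRc ⟨hR0.le, hgt.le⟩
      exact hnotA s hs.1 hs.2 (by rw [hRs]; ring)
    · by_contra hge
      push_neg at hge
      have hne : S t ≠ 0 := fun h => hnotA t ht le_rfl (by rw [h]; ring)
      have hlt : S t < 0 := lt_of_le_of_ne hge hne
      obtain ⟨s, hs, hSs⟩ := intermediate_value_Icc' ht hSc ⟨hlt.le, hS0.le⟩
      exact hnotA s hs.1 hs.2 (by rw [hSs]; ring)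
  -- closed quadrant on [0, τ]
  have hquadcl : ∀ t ∈ Set.Icc (0:ℝ) τ, R t ≤ 0 ∧ 0 ≤ S t := by
    intro t ht
    rcases ht.2.eq_or_lt with h | h
    · have htpos : 0 < t := h ▸ hτpos
      have hRlim : Filter.Tendsto R (nhdsWithin t (Set.Iio t)) (nhds (R t)) :=
        ((hRdiff t ht.1).continuousAt).continuousWithinAt
      have hSlim : Filter.Tendsto S (nhdsWithin t (Set.Iio t)) (nhds (S t)) :=
        ((hSdiff t ht.1).continuousAt).continuousWithinAt
      have hmem : Set.Ioo (0:ℝ) t ∈ nhdsWithin t (Set.Iio t) :=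
        Ioo_mem_nhdsLT_of_mem ⟨htpos, le_rfl⟩
      constructor
      · refine le_of_tendsto hRlim ?_
        filter_upwards [hmem] with s hs
        exact (hquad s hs.1.le (lt_of_lt_of_le hs.2 ht.2)).1.le
      · refine ge_of_tendsto hSlim ?_
        filter_upwards [hmem] with s hs
        exact (hquad s hs.1.le (lt_of_lt_of_le hs.2 ht.2)).2.le
    · obtain ⟨h1, h2⟩ := hquad t ht.1 h
      exact ⟨h1.le, h2.le⟩
  have hmono := mono_helper kcf v c hkcf hv hc R S hRdiff hSdiff hR hS τ hτpos
    (fun s hs => hquad s hs.1.le hs.2)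
  have hcpos : 0 < c := by rw [hc]; positivity
  have hM1 : (1:ℝ) ≤ max c 1 := le_max_right c 1
  have hMc : c ≤ max c 1 := le_max_left c 1
  have hMpos : (0:ℝ) < max c 1 := lt_of_lt_of_le one_pos hM1
  have heps2 : 0 < (S 0 + c * R 0) ^ 2 :=
    lt_of_le_of_ne (sq_nonneg _) (Ne.symm (pow_ne_zero 2 heps0))
  refine ⟨τ, hτpos, ?_, ?_⟩
  · rcases mul_eq_zero.mp hτA.2 with h | h
    · exact Or.inl h
    · exact Or.inr h
  · intro t ht
    obtain ⟨he2, hN⟩ := hmono t ht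
    obtain ⟨hRle, hSle⟩ := hquadcl t ht
    have hkey : (S t + c * R t) ^ 2 ≤ (max c 1) ^ 2 * (R t ^ 2 + S t ^ 2) := by
      nlinarith [mul_nonneg (mul_nonneg hcpos.le (neg_nonneg.mpr hRle)) hSle,
        mul_nonneg (mul_nonneg (sub_nonneg.mpr hMc) (by linarith : (0:ℝ) ≤ max c 1 + c)) (sq_nonneg (R t)),
        mul_nonneg (mul_nonneg (sub_nonneg.mpr hM1) (by linarith : (0:ℝ) ≤ max c 1 + 1)) (sq_nonneg (S t))]
    have hdist : (S 0 + c * R 0) ^ 2 / (max c 1) ^ 2 ≤ R t ^ 2 + S t ^ 2 := by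
      rw [div_le_iff₀ (by positivity : (0:ℝ) < (max c 1) ^ 2)]
      nlinarith
    refine ⟨?_, hdist, ?_⟩
    · rw [← Real.sqrt_sq_eq_abs, ← Real.sqrt_sq_eq_abs]
      exact Real.sqrt_le_sqrt he2
    · intro h
      rw [Prod.mk.injEq] at h
      have h1 := h.1
      have h2 := h.2
      rw [h1, h2] at hdist
      have : 0 < (S 0 + c * R 0) ^ 2 / (max c 1) ^ 2 := by positivity
      nlinarith
end

section
/- Suppose R(0) < 0 and S(0) > 0. (a) If ε(0) < 0, then there exists τ ∈ (0, S(0)·(1+c²)/kcf] such that S(τ) = 0, and R(t) < 0, S(t) > 0 for all t ∈ [0, τ). (b) If ε(0) > 0 and c ≥ 1, then there exists τ ∈ (0, −R(0)·(c+c³)/kcf] such that R(τ) = 0 or S(τ) = 0. (c) If ε(0) > 0 and c < 1, then there exists τ ∈ (0, −2·R(0)/kcf] such that R(τ) = 0 or S(τ) = 0. In each case the trajectory leaves the quadrant {R < 0, S > 0} within the stated explicit time bound. -/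
open Set

/-- IVT: a continuous function positive at 0 with no zero on `[0,b]` stays positive. -/
lemma ivt_pos_aux (f : ℝ → ℝ) {b : ℝ}
    (hf : ContinuousOn f (Set.Icc 0 b)) (h0 : 0 < f 0)
    (hne : ∀ t ∈ Set.Icc 0 b, f t ≠ 0) : ∀ t ∈ Set.Icc 0 b, 0 < f t := by
  intro t ht
  by_contra h
  push_neg at h
  have hlt : f t < 0 := lt_of_le_of_ne h (hne t ht)
  have hsub : Set.Icc (0:ℝ) t ⊆ Set.Icc 0 b := Set.Icc_subset_Icc le_rfl ht.2
  have := intermediate_value_Icc' ht.1 (hf.mono hsub)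
  have h0mem : (0:ℝ) ∈ Set.Icc (f t) (f 0) := ⟨hlt.le, h0.le⟩
  obtain ⟨z, hz, hfz⟩ := this h0mem
  exact hne z (hsub hz) hfz

/-- Existence of a zero on `[0,b]` when `f 0 < 0 ≤ f b`. -/
lemma exists_zero_aux (f : ℝ → ℝ) {b : ℝ} (hb : 0 ≤ b)
    (hf : ContinuousOn f (Set.Icc 0 b)) (h0 : f 0 < 0) (hb' : 0 ≤ f b) :
    ∃ z ∈ Set.Icc 0 b, f z = 0 := by
  have := intermediate_value_Icc hb hf
  obtain ⟨z, hz, hfz⟩ := this ⟨h0.le, hb'⟩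
  exact ⟨z, hz, hfz⟩

/-- First zero of a function starting negative. -/
lemma first_zero_aux (f : ℝ → ℝ) {b : ℝ}
    (hf : ContinuousOn f (Set.Icc 0 b))
    (hz : ∃ z ∈ Set.Icc 0 b, f z = 0) (h0 : f 0 < 0) :
    ∃ m ∈ Set.Icc (0:ℝ) b, f m = 0 ∧ ∀ t ∈ Set.Icc 0 m, t ≠ m → f t < 0 := by
  obtain ⟨z0, hz0, hfz0⟩ := hz
  set Z : Set ℝ := Set.Icc 0 b ∩ f ⁻¹' {0} with hZ
  have hZclosed : IsClosed Z := hf.preimage_isClosed_of_isClosed isClosed_Icc isClosed_singleton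
  have hZne : Z.Nonempty := ⟨z0, hz0, hfz0⟩
  have hZbdd : BddBelow Z := ⟨0, fun x hx => hx.1.1⟩
  have hmem : sInf Z ∈ Z := hZclosed.csInf_mem hZne hZbdd
  refine ⟨sInf Z, hmem.1, hmem.2, ?_⟩
  intro t ht htne
  have htlt : t < sInf Z := lt_of_le_of_ne ht.2 htne
  have htb : t ∈ Set.Icc (0:ℝ) b := ⟨ht.1, le_trans ht.2 hmem.1.2⟩
  by_contra h
  push_neg at h
  -- f t ≥ 0, so there is a zero in [0,t], contradicting minimality
  have hsub : Set.Icc (0:ℝ) t ⊆ Set.Icc 0 b := Set.Icc_subset_Icc le_rfl htb.2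
  obtain ⟨z, hz, hfz⟩ := exists_zero_aux f ht.1 (hf.mono hsub) h0 h
  have : sInf Z ≤ z := csInf_le hZbdd ⟨hsub hz, hfz⟩
  linarith [hz.2]

/-- Sign persistence: if `f' = g·f` with `g ≥ 0` and `f 0 < 0`, then `f < 0` on `[0,b]`. -/
lemma neg_persist_aux (f g : ℝ → ℝ) {b : ℝ}
    (hf : ∀ t ∈ Set.Icc (0:ℝ) b, HasDerivAt f (g t * f t) t)
    (hg : ∀ t ∈ Set.Icc (0:ℝ) b, 0 ≤ g t)
    (h0 : f 0 < 0) : ∀ t ∈ Set.Icc (0:ℝ) b, f t < 0 := by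
  have hcont : ContinuousOn f (Set.Icc 0 b) :=
    fun t ht => (hf t ht).continuousAt.continuousWithinAt
  by_contra h
  push_neg at h
  obtain ⟨t0, ht0, hft0⟩ := h
  have hsub : Set.Icc (0:ℝ) t0 ⊆ Set.Icc 0 b := Set.Icc_subset_Icc le_rfl ht0.2
  obtain ⟨z, hz, hfz⟩ := exists_zero_aux f ht0.1 (hcont.mono hsub) h0 hft0
  obtain ⟨m, hm, hfm, hneg⟩ := first_zero_aux f (hcont.mono hsub) ⟨z, hz, hfz⟩ h0
  have hmsub : Set.Icc (0:ℝ) m ⊆ Set.Icc 0 b := Set.Icc_subset_Icc le_rfl (hsub ⟨hm.1, hm.2⟩).2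
  have hanti : AntitoneOn f (Set.Icc 0 m) := by
    apply antitoneOn_of_deriv_nonpos (convex_Icc 0 m) (hcont.mono hmsub)
    · intro x hx
      rw [interior_Icc] at hx
      exact ((hf x (hmsub ⟨hx.1.le, hx.2.le⟩)).differentiableAt).differentiableWithinAt
    · intro x hx
      rw [interior_Icc] at hx
      have hxm : x ∈ Set.Icc (0:ℝ) m := ⟨hx.1.le, hx.2.le⟩
      rw [(hf x (hmsub hxm)).deriv]
      exact mul_nonpos_of_nonneg_of_nonpos (hg x (hmsub hxm)) (hneg x hxm (ne_of_lt hx.2)).le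
  have h0m : (0:ℝ) ∈ Set.Icc (0:ℝ) m := ⟨le_rfl, hm.1⟩
  have hmm : m ∈ Set.Icc (0:ℝ) m := ⟨hm.1, le_rfl⟩
  have := hanti h0m hmm hm.1
  rw [hfm] at this
  linarith

/-- Sign persistence: if `f' = g·f` with `g ≥ 0` and `f 0 > 0`, then `f > 0` on `[0,b]`. -/
lemma pos_persist_aux (f g : ℝ → ℝ) {b : ℝ}
    (hf : ∀ t ∈ Set.Icc (0:ℝ) b, HasDerivAt f (g t * f t) t)
    (hg : ∀ t ∈ Set.Icc (0:ℝ) b, 0 ≤ g t)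
    (h0 : 0 < f 0) : ∀ t ∈ Set.Icc (0:ℝ) b, 0 < f t := by
  have h := neg_persist_aux (fun t => -f t) g ?_ hg (by simpa using h0)
  · intro t ht
    have := h t ht
    simpa using this
  · intro t ht
    have : HasDerivAt (fun i => -f i) (-(g t * f t)) t := (hf t ht).fun_neg
    convert this using 1
    ring

/-- If `f' ≥ k` on `[0,b]`, then `f 0 + k·b ≤ f b`. -/
lemma shift_mono_aux (f f' : ℝ → ℝ) {k b : ℝ} (hb : 0 ≤ b)
    (hf : ∀ t ∈ Set.Icc (0:ℝ) b, HasDerivAt f (f' t) t)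
    (hk : ∀ t ∈ Set.Icc (0:ℝ) b, k ≤ f' t) : f 0 + k * b ≤ f b := by
  have hmono : MonotoneOn (fun t => f t - k * t) (Set.Icc 0 b) := by
    apply monotoneOn_of_deriv_nonneg (convex_Icc 0 b)
    · exact fun t ht => ((hf t ht).continuousAt.continuousWithinAt).sub
        ((continuous_const.mul continuous_id).continuousWithinAt)
    · intro x hx
      rw [interior_Icc] at hx
      have hxm : x ∈ Set.Icc (0:ℝ) b := ⟨hx.1.le, hx.2.le⟩
      exact ((hf x hxm).sub ((hasDerivAt_id x).const_mul k)).differentiableAt.differentiableWithinAt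
    · intro x hx
      rw [interior_Icc] at hx
      have hxm : x ∈ Set.Icc (0:ℝ) b := ⟨hx.1.le, hx.2.le⟩
      have hd : HasDerivAt (fun t => f t - k * t) (f' x - k * 1) x :=
        (hf x hxm).sub ((hasDerivAt_id x).const_mul k)
      rw [hd.deriv]
      have := hk x hxm
      linarith
  have := hmono ⟨le_rfl, hb⟩ ⟨hb, le_rfl⟩ hb
  simp only [mul_zero, sub_zero] at this
  linarith

/-- Part I of the proof of Lemma 4: starting in the critical quadrant
`R(0) < 0`, `S(0) > 0`, the trajectory leaves the quadrant within an explicit time bound: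
(a) if `ε(0) < 0`, at some `τ ≤ S(0)(1+c²)/kcf` with `S(τ) = 0` (and `R < 0`, `S > 0`
before `τ`); (b) if `ε(0) > 0` and `c ≥ 1`, at some `τ ≤ −R(0)(c+c³)/kcf`;
(c) if `ε(0) > 0` and `c < 1`, at some `τ ≤ −2R(0)/kcf`. Here `ε = S + c·R`, `c = kcf/v²`. -/
theorem cf_leave_critical_quadrant
    (kcf v c : ℝ) (hkcf : 0 < kcf) (hv : 0 < v) (hc : c = kcf / v ^ 2)
    (R S : ℝ → ℝ)
    (hRdiff : ∀ t, 0 ≤ t → DifferentiableAt ℝ R t)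
    (hSdiff : ∀ t, 0 ≤ t → DifferentiableAt ℝ S t)
    (hR : ∀ t, 0 ≤ t → (R t, S t) ≠ (0, 0) →
      HasDerivAt R (kcf * R t * S t / (R t ^ 2 + S t ^ 2) + v ^ 2) t)
    (hS : ∀ t, 0 ≤ t → (R t, S t) ≠ (0, 0) →
      HasDerivAt S (-(kcf * R t ^ 2 / (R t ^ 2 + S t ^ 2))) t)
    (hR0 : R 0 < 0) (hS0 : 0 < S 0) :
    (S 0 + c * R 0 < 0 →
      ∃ τ : ℝ, 0 < τ ∧ τ ≤ S 0 * (1 + c ^ 2) / kcf ∧ S τ = 0 ∧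
        ∀ t ∈ Set.Ico (0 : ℝ) τ, R t < 0 ∧ 0 < S t) ∧
    (0 < S 0 + c * R 0 → 1 ≤ c →
      ∃ τ : ℝ, 0 < τ ∧ τ ≤ -R 0 * (c + c ^ 3) / kcf ∧ (R τ = 0 ∨ S τ = 0)) ∧
    (0 < S 0 + c * R 0 → c < 1 →
      ∃ τ : ℝ, 0 < τ ∧ τ ≤ -(2 * R 0) / kcf ∧ (R τ = 0 ∨ S τ = 0)) := by
  have hv2 : (0:ℝ) < v ^ 2 := by positivity
  have hcpos : 0 < c := by rw [hc]; positivity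
  have hcv : c * v ^ 2 = kcf := by rw [hc]; field_simp
  have h1c : (0:ℝ) < 1 + c ^ 2 := by positivity
  have mkne : ∀ t : ℝ, R t ≠ 0 ∨ S t ≠ 0 → (R t, S t) ≠ (0, 0) := by
    intro t h hp
    rw [Prod.mk.injEq] at hp
    rcases h with h | h
    · exact h hp.1
    · exact h hp.2
  have hDpos : ∀ t : ℝ, R t ≠ 0 ∨ S t ≠ 0 → 0 < R t ^ 2 + S t ^ 2 := by
    intro t h
    rcases h with h | h
    · have h1 : 0 < R t ^ 2 := by positivity
      nlinarith [sq_nonneg (S t)]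
    · have h1 : 0 < S t ^ 2 := by positivity
      nlinarith [sq_nonneg (R t)]
  have contR : ∀ b : ℝ, ContinuousOn R (Set.Icc 0 b) :=
    fun b t ht => (hRdiff t ht.1).continuousAt.continuousWithinAt
  have contS : ∀ b : ℝ, ContinuousOn S (Set.Icc 0 b) :=
    fun b t ht => (hSdiff t ht.1).continuousAt.continuousWithinAt
  -- derivative of ε = S + c·R
  have hE : ∀ t : ℝ, 0 ≤ t → R t ≠ 0 ∨ S t ≠ 0 →
      HasDerivAt (fun u => S u + c * R u)
        ((kcf * S t / (R t ^ 2 + S t ^ 2)) * (S t + c * R t)) t := by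
    intro t ht h
    have hD := hDpos t h
    have hne := mkne t h
    have hd : HasDerivAt (fun u => S u + c * R u) (-(kcf * R t ^ 2 / (R t ^ 2 + S t ^ 2)) + c * (kcf * R t * S t / (R t ^ 2 + S t ^ 2) + v ^ 2)) t := (hS t ht hne).fun_add ((hR t ht hne).const_mul c)
    convert hd using 1
    field_simp
    linear_combination (-(R t ^ 2 + S t ^ 2)) * hcv
  -- ε stays negative while S > 0
  have epsNeg : ∀ b : ℝ, S 0 + c * R 0 < 0 → (∀ t ∈ Set.Icc (0:ℝ) b, 0 < S t) →
      ∀ t ∈ Set.Icc (0:ℝ) b, S t + c * R t < 0 := by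
    intro b hε0 hSpos
    exact neg_persist_aux (fun u => S u + c * R u)
      (fun u => kcf * S u / (R u ^ 2 + S u ^ 2))
      (fun t ht => hE t ht.1 (Or.inr (hSpos t ht).ne'))
      (fun t ht => div_nonneg (mul_nonneg hkcf.le (hSpos t ht).le)
        (hDpos t (Or.inr (hSpos t ht).ne')).le)
      hε0
  have epsPos : ∀ b : ℝ, 0 < S 0 + c * R 0 → (∀ t ∈ Set.Icc (0:ℝ) b, 0 < S t) →
      ∀ t ∈ Set.Icc (0:ℝ) b, 0 < S t + c * R t := by
    intro b hε0 hSpos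
    exact pos_persist_aux (fun u => S u + c * R u)
      (fun u => kcf * S u / (R u ^ 2 + S u ^ 2))
      (fun t ht => hE t ht.1 (Or.inr (hSpos t ht).ne'))
      (fun t ht => div_nonneg (mul_nonneg hkcf.le (hSpos t ht).le)
        (hDpos t (Or.inr (hSpos t ht).ne')).le)
      hε0
  refine ⟨?_, ?_, ?_⟩
  -- Part (a)
  · intro hε0
    set T := S 0 * (1 + c ^ 2) / kcf with hT
    have hTpos : 0 < T := div_pos (by nlinarith) hkcf
    have hzS : ∃ z ∈ Set.Icc (0:ℝ) T, S z = 0 := by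
      by_contra h
      push_neg at h
      have hSpos : ∀ t ∈ Set.Icc (0:ℝ) T, 0 < S t := ivt_pos_aux S (contS T) hS0 h
      have hEneg := epsNeg T hε0 hSpos
      have hbound : ∀ t ∈ Set.Icc (0:ℝ) T,
          kcf / (1 + c ^ 2) ≤ kcf * R t ^ 2 / (R t ^ 2 + S t ^ 2) := by
        intro t ht
        have hSt := hSpos t ht
        have hEt := hEneg t ht
        have hRt : R t < 0 := by nlinarith
        have hD := hDpos t (Or.inr hSt.ne')
        rw [div_le_div_iff₀ h1c hD]
        have hcR : c * R t < 0 := mul_neg_of_pos_of_neg hcpos hRt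
        nlinarith [mul_pos hkcf (mul_pos_of_neg_of_neg
          (show c * R t - S t < 0 by linarith) (show c * R t + S t < 0 by linarith))]
      have hlin := shift_mono_aux (fun u => -S u)
        (fun u => kcf * R u ^ 2 / (R u ^ 2 + S u ^ 2)) hTpos.le
        (fun t ht => by simpa using (hS t ht.1 (mkne t (Or.inr (hSpos t ht).ne'))).fun_neg)
        hbound
      have h2 : -S 0 + kcf / (1 + c ^ 2) * T ≤ -S T := hlin
      have hTk : kcf / (1 + c ^ 2) * T = S 0 := by
        rw [hT]; field_simp
      have hST := hSpos T ⟨hTpos.le, le_rfl⟩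
      linarith
    obtain ⟨m, hm, hSm, hSneg⟩ := first_zero_aux (fun u => -S u) ((contS T).neg)
      (by obtain ⟨z, hz, h0'⟩ := hzS; exact ⟨z, hz, by simpa using h0'⟩)
      (neg_lt_zero.mpr hS0)
    have hSm0 : S m = 0 := by simpa using hSm
    have hmpos : 0 < m := by
      rcases eq_or_lt_of_le hm.1 with h | h
      · exfalso; rw [← h] at hSm0; linarith
      · exact h
    have hSbefore : ∀ t ∈ Set.Icc (0:ℝ) m, t ≠ m → 0 < S t := by
      intro t ht htne
      have := hSneg t ht htne
      simpa using this
    refine ⟨m, hmpos, hm.2, hSm0, ?_⟩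
    intro t ht
    have htm : t ∈ Set.Icc (0:ℝ) m := ⟨ht.1, ht.2.le⟩
    have hSt : 0 < S t := hSbefore t htm (ne_of_lt ht.2)
    have hSpos' : ∀ s ∈ Set.Icc (0:ℝ) t, 0 < S s := by
      intro s hs
      exact hSbefore s ⟨hs.1, hs.2.trans ht.2.le⟩ (by rintro rfl; exact absurd hs.2 (not_le.mpr ht.2))
    have hEt := epsNeg t hε0 hSpos' t ⟨ht.1, le_rfl⟩
    exact ⟨by nlinarith, hSt⟩
  -- Part (b)
  · intro hε0 hc1
    set T := -R 0 * (c + c ^ 3) / kcf with hT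
    have hTpos : 0 < T :=
      div_pos (mul_pos (neg_pos.mpr hR0) (by positivity)) hkcf
    by_contra hcon
    push_neg at hcon
    have hRne : ∀ t ∈ Set.Icc (0:ℝ) T, R t ≠ 0 := by
      intro t ht
      rcases eq_or_lt_of_le ht.1 with h | h
      · rw [← h]; exact hR0.ne
      · exact (hcon t h ht.2).1
    have hSne : ∀ t ∈ Set.Icc (0:ℝ) T, S t ≠ 0 := by
      intro t ht
      rcases eq_or_lt_of_le ht.1 with h | h
      · rw [← h]; exact hS0.ne'
      · exact (hcon t h ht.2).2
    have hSpos := ivt_pos_aux S (contS T) hS0 hSne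
    have hRneg : ∀ t ∈ Set.Icc (0:ℝ) T, R t < 0 := by
      have h := ivt_pos_aux (fun u => -R u) ((contR T).neg) (neg_pos.mpr hR0)
        (fun t ht => by simpa using hRne t ht)
      intro t ht
      have := h t ht
      simpa using this
    have hEpos := epsPos T hε0 hSpos
    have hbound : ∀ t ∈ Set.Icc (0:ℝ) T,
        kcf / (c + c ^ 3) ≤ kcf * R t * S t / (R t ^ 2 + S t ^ 2) + v ^ 2 := by
      intro t ht
      have hRt := hRneg t ht
      have hSt := hSpos t ht
      have hEt := hEpos t ht
      have hD := hDpos t (Or.inl hRt.ne)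
      have hcS : 0 ≤ c * S t + R t := by nlinarith
      have key : (1 + c ^ 2) * (-R t * S t) ≤ c * (R t ^ 2 + S t ^ 2) := by
        nlinarith [mul_nonneg hEt.le hcS]
      have hv2' : v ^ 2 = kcf / c := by rw [eq_div_iff hcpos.ne']; linarith
      have hcc : (0:ℝ) < c + c ^ 3 := by positivity
      have expand : kcf * R t * S t / (R t ^ 2 + S t ^ 2) + v ^ 2 - kcf / (c + c ^ 3)
          = (c * (R t ^ 2 + S t ^ 2) - (1 + c ^ 2) * (-R t * S t)) * kcf
            / ((1 + c ^ 2) * (R t ^ 2 + S t ^ 2)) := by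
        rw [hv2']
        field_simp
        ring
      have h2 : 0 ≤ (c * (R t ^ 2 + S t ^ 2) - (1 + c ^ 2) * (-R t * S t)) * kcf
          / ((1 + c ^ 2) * (R t ^ 2 + S t ^ 2)) :=
        div_nonneg (mul_nonneg (by linarith) hkcf.le) (by positivity)
      linarith
    have hlin := shift_mono_aux R
      (fun u => kcf * R u * S u / (R u ^ 2 + S u ^ 2) + v ^ 2) hTpos.le
      (fun t ht => hR t ht.1 (mkne t (Or.inr (hSpos t ht).ne'))) hbound
    have hcc : (0:ℝ) < c + c ^ 3 := by positivity
    have hTk : kcf / (c + c ^ 3) * T = -R 0 := by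
      rw [hT]; field_simp
    have hRT := hRneg T ⟨hTpos.le, le_rfl⟩
    linarith
  -- Part (c)
  · intro hε0 hc1
    set T := -(2 * R 0) / kcf with hT
    have hTpos : 0 < T := div_pos (by nlinarith) hkcf
    by_contra hcon
    push_neg at hcon
    have hRne : ∀ t ∈ Set.Icc (0:ℝ) T, R t ≠ 0 := by
      intro t ht
      rcases eq_or_lt_of_le ht.1 with h | h
      · rw [← h]; exact hR0.ne
      · exact (hcon t h ht.2).1
    have hSne : ∀ t ∈ Set.Icc (0:ℝ) T, S t ≠ 0 := by
      intro t ht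
      rcases eq_or_lt_of_le ht.1 with h | h
      · rw [← h]; exact hS0.ne'
      · exact (hcon t h ht.2).2
    have hSpos := ivt_pos_aux S (contS T) hS0 hSne
    have hRneg : ∀ t ∈ Set.Icc (0:ℝ) T, R t < 0 := by
      have h := ivt_pos_aux (fun u => -R u) ((contR T).neg) (neg_pos.mpr hR0)
        (fun t ht => by simpa using hRne t ht)
      intro t ht
      have := h t ht
      simpa using this
    have hkv2 : kcf < v ^ 2 := by
      rw [hc] at hc1
      exact (div_lt_one hv2).mp hc1
    have hbound : ∀ t ∈ Set.Icc (0:ℝ) T,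
        v ^ 2 - kcf / 2 ≤ kcf * R t * S t / (R t ^ 2 + S t ^ 2) + v ^ 2 := by
      intro t ht
      have hRt := hRneg t ht
      have hD := hDpos t (Or.inl hRt.ne)
      have key : -(kcf / 2) ≤ kcf * R t * S t / (R t ^ 2 + S t ^ 2) := by
        rw [le_div_iff₀ hD]
        nlinarith [sq_nonneg (R t + S t)]
      linarith
    have hlin := shift_mono_aux R
      (fun u => kcf * R u * S u / (R u ^ 2 + S u ^ 2) + v ^ 2) hTpos.le
      (fun t ht => hR t ht.1 (mkne t (Or.inr (hSpos t ht).ne'))) hbound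
    have hRT := hRneg T ⟨hTpos.le, le_rfl⟩
    have hkT : kcf * T = -(2 * R 0) := by
      rw [hT]; field_simp
    have h3 : kcf * (R 0 + (v ^ 2 - kcf / 2) * T) < 0 :=
      mul_neg_of_pos_of_neg hkcf (by linarith)
    have h4 : kcf * ((v ^ 2 - kcf / 2) * T) = (v ^ 2 - kcf / 2) * (kcf * T) := by ring
    rw [mul_add, h4, hkT] at h3
    have hp : 0 < (-R 0) * (v ^ 2 - kcf) := mul_pos (neg_pos.mpr hR0) (sub_pos.mpr hkv2)
    have h5 : kcf * R 0 + (v ^ 2 - kcf / 2) * -(2 * R 0) = 2 * ((-R 0) * (v ^ 2 - kcf)) := by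
      ring
    linarith
end

section
/- Suppose R(0) < 0, S(0) > 0 and ε(0) = 0, and set τ = S(0)·(1+c²)/kcf. Then for all t ∈ [0, τ]: ε(t) = 0 (i.e., S(t) = −c·R(t)) and S(t) = S(0) − (kcf/(1+c²))·t. In particular S(τ) = 0 and R(τ) = 0, i.e., a collision with the point obstacle occurs exactly at time τ. -/
open Set Filter Real

private lemma left_limit_eq {f g : ℝ → ℝ} {u : ℝ} (hu : 0 < u)
    (hf : ContinuousAt f u) (hg : ContinuousAt g u)
    (h : ∀ s ∈ Set.Ico (0:ℝ) u, f s = g s) : f u = g u := by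
  have hcl : u ∈ closure (Set.Ico (0:ℝ) u) := by
    rw [closure_Ico hu.ne]
    exact ⟨hu.le, le_rfl⟩
  have hne : (nhdsWithin u (Set.Ico (0:ℝ) u)).NeBot :=
    mem_closure_iff_nhdsWithin_neBot.mp hcl
  have h1 : Filter.Tendsto f (nhdsWithin u (Set.Ico (0:ℝ) u)) (nhds (f u)) :=
    hf.continuousWithinAt
  have h2 : Filter.Tendsto f (nhdsWithin u (Set.Ico (0:ℝ) u)) (nhds (g u)) := by
    have h3 : Filter.Tendsto g (nhdsWithin u (Set.Ico (0:ℝ) u)) (nhds (g u)) :=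
      hg.continuousWithinAt
    refine h3.congr' ?_
    filter_upwards [self_mem_nhdsWithin] with s hs
    exact (h s hs).symm
  exact tendsto_nhds_unique h1 h2

/-- collision case of Lemma 4: if `R(0) < 0`, `S(0) > 0` and
`ε(0) = S(0) + c·R(0) = 0` (with `c = kcf/v²`), then with `τ = S(0)(1+c²)/kcf` one has
`ε(t) = 0` (i.e. `S(t) = −c·R(t)`) and `S(t) = S(0) − (kcf/(1+c²))·t` on `[0, τ]`;
in particular `S(τ) = 0` and `R(τ) = 0`, i.e. a collision occurs exactly at time `τ`. -/
theorem cf_collision_ray_leads_to_collision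
    (kcf v c : ℝ) (hkcf : 0 < kcf) (hv : 0 < v) (hc : c = kcf / v ^ 2)
    (R S : ℝ → ℝ)
    (hRdiff : ∀ t, 0 ≤ t → DifferentiableAt ℝ R t)
    (hSdiff : ∀ t, 0 ≤ t → DifferentiableAt ℝ S t)
    (hR : ∀ t, 0 ≤ t → (R t, S t) ≠ (0, 0) →
      HasDerivAt R (kcf * R t * S t / (R t ^ 2 + S t ^ 2) + v ^ 2) t)
    (hS : ∀ t, 0 ≤ t → (R t, S t) ≠ (0, 0) →
      HasDerivAt S (-(kcf * R t ^ 2 / (R t ^ 2 + S t ^ 2))) t)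
    (hR0 : R 0 < 0) (hS0 : 0 < S 0) (heps0 : S 0 + c * R 0 = 0)
    (τ : ℝ) (hτ : τ = S 0 * (1 + c ^ 2) / kcf) :
    (∀ t ∈ Set.Icc (0 : ℝ) τ,
      S t + c * R t = 0 ∧ S t = S 0 - kcf / (1 + c ^ 2) * t) ∧
    S τ = 0 ∧ R τ = 0 := by
  have hv2 : (0:ℝ) < v ^ 2 := by positivity
  have hcpos : 0 < c := by rw [hc]; positivity
  have hcv : c * v ^ 2 = kcf := by
    rw [hc]; field_simp
  have h1c : (0:ℝ) < 1 + c ^ 2 := by positivity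
  set k' : ℝ := kcf / (1 + c ^ 2) with hk'
  have hk'pos : 0 < k' := by positivity
  have hk'τ : k' * τ = S 0 := by
    rw [hk', hτ]; field_simp
  have hτpos : 0 < τ := by
    rw [hτ]; positivity
  -- helper: nonzero pair
  have pair_ne : ∀ t : ℝ, 0 < R t ^ 2 + S t ^ 2 → (R t, S t) ≠ (0, 0) := by
    intro t h heq
    rw [Prod.mk.injEq] at heq
    rw [heq.1, heq.2] at h
    norm_num at h
  -- continuity
  have hRc : ∀ t, 0 ≤ t → ContinuousAt R t := fun t ht => (hRdiff t ht).continuousAt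
  have hSc : ∀ t, 0 ≤ t → ContinuousAt S t := fun t ht => (hSdiff t ht).continuousAt
  -- main propagation lemma
  have main : ∀ b : ℝ, 0 ≤ b → (∀ s ∈ Set.Icc (0:ℝ) b, 0 < R s ^ 2 + S s ^ 2) →
      ∀ s ∈ Set.Icc (0:ℝ) b, S s + c * R s = 0 ∧ S s = S 0 - k' * s := by
    intro b hb hnz
    set ε : ℝ → ℝ := fun t => S t + c * R t with hε
    have hεcont : ContinuousOn ε (Set.Icc 0 b) := fun t ht =>
      (((hSc t ht.1).add ((hRc t ht.1).const_mul c)).continuousWithinAt)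
    set coef : ℝ → ℝ := fun t => kcf * S t / (R t ^ 2 + S t ^ 2) with hcoef
    have hεderiv : ∀ t ∈ Set.Ico (0:ℝ) b, HasDerivAt ε (coef t * ε t) t := by
      intro t ht
      have hnzt := hnz t ⟨ht.1, ht.2.le⟩
      have hd := (hS t ht.1 (pair_ne t hnzt)).add ((hR t ht.1 (pair_ne t hnzt)).const_mul c)
      refine hd.congr_deriv (Eq.symm ?_)
      have hD : R t ^ 2 + S t ^ 2 ≠ 0 := ne_of_gt hnzt
      show coef t * ε t = _
      simp only [hε, hcoef]
      rw [← hcv]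
      field_simp
      ring
    obtain ⟨K, hK⟩ := IsCompact.exists_bound_of_continuousOn (isCompact_Icc (a := (0:ℝ)) (b := b))
      (f := coef) (by
        apply ContinuousOn.div
        · exact fun t ht => (continuousAt_const.mul (hSc t ht.1)).continuousWithinAt
        · exact fun t ht => (((hRc t ht.1).pow 2).add ((hSc t ht.1).pow 2)).continuousWithinAt
        · exact fun t ht => ne_of_gt (hnz t ht))
    have hgron := norm_le_gronwallBound_of_norm_deriv_right_le (δ := 0) (K := K) (ε := 0)
      hεcont (fun t ht => (hεderiv t ht).hasDerivWithinAt)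
      (by simp [hε, heps0]) (by
        intro t ht
        rw [norm_mul, add_zero]
        exact mul_le_mul_of_nonneg_right (hK t ⟨ht.1, ht.2.le⟩) (norm_nonneg _))
    have hε0 : ∀ s ∈ Set.Icc (0:ℝ) b, ε s = 0 := by
      intro s hs
      have := hgron s hs
      rw [gronwallBound_ε0_δ0] at this
      simpa using le_antisymm this (norm_nonneg _)
    -- now S is linear
    have hSderiv : ∀ t ∈ Set.Ico (0:ℝ) b,
        HasDerivAt (fun t => S t + k' * t) 0 t := by
      intro t ht
      have hnzt := hnz t ⟨ht.1, ht.2.le⟩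
      have hεt := hε0 t ⟨ht.1, ht.2.le⟩
      have hSt : S t = -(c * R t) := by simp only [hε] at hεt; linarith
      have hRt : R t ≠ 0 := by
        intro h
        rw [h, hSt, h] at hnzt
        norm_num at hnzt
      have hd := (hS t ht.1 (pair_ne t hnzt)).add ((hasDerivAt_id t).const_mul k')
      refine hd.congr_deriv (Eq.symm ?_)
      rw [hSt, hk']
      have : R t ^ 2 + (-(c * R t)) ^ 2 = (1 + c ^ 2) * R t ^ 2 := by ring
      rw [this]
      field_simp
      ring
    have hconst := constant_of_has_deriv_right_zero
      (f := fun t => S t + k' * t) (a := 0) (b := b)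
      (fun t ht => ((hSc t ht.1).add (continuousAt_const.mul continuousAt_id)).continuousWithinAt)
      (fun t ht => (hSderiv t ht).hasDerivWithinAt)
    intro s hs
    refine ⟨hε0 s hs, ?_⟩
    have := hconst s hs
    linarith [this]
  -- bootstrap via sSup
  set P : ℝ → Prop := fun t => S t + c * R t = 0 ∧ S t = S 0 - k' * t with hP
  set A : Set ℝ := {b | b ∈ Set.Icc (0:ℝ) τ ∧ ∀ s ∈ Set.Icc (0:ℝ) b, P s} with hA
  have h0A : (0:ℝ) ∈ A := by
    refine ⟨⟨le_rfl, hτpos.le⟩, ?_⟩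
    intro s hs
    have : s = 0 := le_antisymm hs.2 hs.1
    rw [this]
    exact ⟨heps0, by ring⟩
  have hAbdd : BddAbove A := ⟨τ, fun b hb => hb.1.2⟩
  set u : ℝ := sSup A with hu
  have hu0 : 0 ≤ u := le_csSup hAbdd h0A
  have huτ : u ≤ τ := csSup_le ⟨0, h0A⟩ (fun b hb => hb.1.2)
  -- P holds on [0, u)
  have hPlt : ∀ s ∈ Set.Ico (0:ℝ) u, P s := by
    intro s hs
    obtain ⟨b, hbA, hsb⟩ := exists_lt_of_lt_csSup ⟨0, h0A⟩ hs.2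
    exact hbA.2 s ⟨hs.1, hsb.le⟩
  -- P holds at u
  have hPu : P u := by
    rcases eq_or_lt_of_le hu0 with h | h
    · rw [← h]; exact ⟨heps0, by ring⟩
    · constructor
      · exact left_limit_eq h ((hSc u hu0).add ((hRc u hu0).const_mul c))
          continuousAt_const (fun s hs => (hPlt s hs).1)
      · exact left_limit_eq h (hSc u hu0)
          (continuousAt_const.sub (continuousAt_const.mul continuousAt_id))
          (fun s hs => (hPlt s hs).2)
  have hPIcc : ∀ s ∈ Set.Icc (0:ℝ) u, P s := by
    intro s hs
    rcases eq_or_lt_of_le hs.2 with h | h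
    · rw [h]; exact hPu
    · exact hPlt s ⟨hs.1, h⟩
  -- S positive on [0,u] when u < τ would give a contradiction; show u = τ
  have huτ' : u = τ := by
    by_contra hne
    have hult : u < τ := lt_of_le_of_ne huτ hne
    have hSpos : ∀ s ∈ Set.Icc (0:ℝ) u, 0 < S s := by
      intro s hs
      rw [(hPIcc s hs).2]
      have : k' * s ≤ k' * u := mul_le_mul_of_nonneg_left hs.2 hk'pos.le
      have h2 : k' * u < k' * τ := (mul_lt_mul_iff_right₀ hk'pos).mpr hult
      rw [hk'τ] at h2
      linarith
    have hSu : 0 < S u := hSpos u ⟨hu0, le_rfl⟩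
    have hev : ∀ᶠ s in nhds u, 0 < S s :=
      (hSc u hu0).eventually (eventually_gt_nhds hSu)
    obtain ⟨δ, hδpos, hδ⟩ := Metric.eventually_nhds_iff.mp hev
    set b' : ℝ := min (u + δ / 2) τ with hb'
    have hub' : u < b' := lt_min (by linarith) hult
    have hb'τ : b' ≤ τ := min_le_right _ _
    have hb'0 : 0 ≤ b' := hu0.trans hub'.le
    have hSposb : ∀ s ∈ Set.Icc (0:ℝ) b', 0 < R s ^ 2 + S s ^ 2 := by
      intro s hs
      have hsp : 0 < S s := by
        rcases le_or_gt s u with h | h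
        · exact hSpos s ⟨hs.1, h⟩
        · apply hδ
          rw [Real.dist_eq, abs_of_pos (by linarith)]
          have : s ≤ u + δ / 2 := le_trans hs.2 (min_le_left _ _)
          linarith
      nlinarith
    have hb'A : b' ∈ A := by
      refine ⟨⟨hb'0, hb'τ⟩, ?_⟩
      exact main b' hb'0 hSposb
    have := le_csSup hAbdd hb'A
    rw [← hu] at this
    linarith
  -- conclusions
  have hPτ : ∀ s ∈ Set.Icc (0:ℝ) τ, P s := huτ' ▸ hPIcc
  have hSτ : S τ = 0 := by
    have := (hPτ τ ⟨hτpos.le, le_rfl⟩).2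
    rw [this, hk'] at *
    nlinarith [hk'τ]
  have hRτ : R τ = 0 := by
    have h1 := (hPτ τ ⟨hτpos.le, le_rfl⟩).1
    rw [hSτ] at h1
    have : c * R τ = 0 := by linarith
    exact (mul_eq_zero.mp this).resolve_left (ne_of_gt hcpos)
  exact ⟨fun t ht => by
    obtain ⟨h1, h2⟩ := hPτ t ht
    exact ⟨h1, by rw [h2, hk']⟩, hSτ, hRτ⟩
end

section
/- Assume (R(0), S(0)) ≠ (0, 0). Then there exists a time τ > 0 with R(τ) = 0 and S(τ) = 0 (a collision with the point obstacle) if and only if R(0) < 0, S(0) > 0 and ε(0) = 0. In particular, a collision occurs only for initial conditions on the collision ray {S + cR = 0, R < 0, S > 0}, a set of measure zero. -/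
open Set Filter Topology Real

/-- Theorem 1 of the paper: for the auxiliary circular-field dynamics
with a point obstacle, a collision (`R(τ) = S(τ) = 0` at some time `τ > 0`) occurs if and
only if the initial condition lies on the collision ray: `R(0) < 0`, `S(0) > 0` and
`ε(0) = S(0) + c·R(0) = 0` (with `c = kcf/v²`), a set of measure zero. -/
theorem cf_collision_iff_collision_ray
    (kcf v c : ℝ) (hkcf : 0 < kcf) (hv : 0 < v) (hc : c = kcf / v ^ 2)
    (R S : ℝ → ℝ)
    (hRdiff : ∀ t, 0 ≤ t → DifferentiableAt ℝ R t)
    (hSdiff : ∀ t, 0 ≤ t → DifferentiableAt ℝ S t)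
    (hR : ∀ t, 0 ≤ t → (R t, S t) ≠ (0, 0) →
      HasDerivAt R (kcf * R t * S t / (R t ^ 2 + S t ^ 2) + v ^ 2) t)
    (hS : ∀ t, 0 ≤ t → (R t, S t) ≠ (0, 0) →
      HasDerivAt S (-(kcf * R t ^ 2 / (R t ^ 2 + S t ^ 2))) t)
    (h0 : (R 0, S 0) ≠ (0, 0)) :
    (∃ τ : ℝ, 0 < τ ∧ R τ = 0 ∧ S τ = 0) ↔
      (R 0 < 0 ∧ 0 < S 0 ∧ S 0 + c * R 0 = 0) := by
  have hv2 : (0:ℝ) < v ^ 2 := by positivity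
  have hcpos : 0 < c := by rw [hc]; positivity
  have hcv : c * v ^ 2 = kcf := by rw [hc]; field_simp
  -- basic facts
  have hne_iff : ∀ t : ℝ, (R t, S t) ≠ (0, 0) ↔ ¬(R t = 0 ∧ S t = 0) := by
    intro t
    constructor
    · rintro h ⟨h1, h2⟩; exact h (by rw [h1, h2])
    · intro h hcon
      exact h ⟨congrArg Prod.fst hcon, congrArg Prod.snd hcon⟩
  have hr2pos : ∀ t : ℝ, (R t, S t) ≠ (0, 0) → 0 < R t ^ 2 + S t ^ 2 := by
    intro t h
    have : R t ≠ 0 ∨ S t ≠ 0 := by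
      by_contra hcon
      push_neg at hcon
      exact (hne_iff t).1 h ⟨hcon.1, hcon.2⟩
    rcases this with h1 | h1
    · have := pow_two_pos_of_ne_zero h1
      nlinarith [sq_nonneg (S t)]
    · have := pow_two_pos_of_ne_zero h1
      nlinarith [sq_nonneg (R t)]
  -- derivative of ε = S + c R
  have hεderiv : ∀ t, 0 ≤ t → (R t, S t) ≠ (0, 0) →
      HasDerivAt (fun t => S t + c * R t)
        (kcf * S t / (R t ^ 2 + S t ^ 2) * (S t + c * R t)) t := by
    intro t ht hne
    have h : HasDerivAt (fun t => S t + c * R t) _ t := (hS t ht hne).add ((hR t ht hne).const_mul c)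
    convert h using 1
    have h2 : R t ^ 2 + S t ^ 2 ≠ 0 := (hr2pos t hne).ne'
    rw [← hcv]
    field_simp
    ring
  -- continuity of ε at nonneg points
  have hεcont : ∀ t : ℝ, 0 ≤ t → ContinuousAt (fun t => S t + c * R t) t := by
    intro t ht
    exact (hSdiff t ht).continuousAt.add (continuousAt_const.mul (hRdiff t ht).continuousAt)
  constructor
  · ------------------------------------------------------------------
    -- Forward direction: collision ⟹ initial condition on the ray
    ------------------------------------------------------------------
    rintro ⟨τ, hτpos, hRτ, hSτ⟩
    set Z : Set ℝ := {t | 0 ≤ t ∧ R t = 0 ∧ S t = 0} with hZdef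
    have hZτ : τ ∈ Z := ⟨hτpos.le, hRτ, hSτ⟩
    have hZne : Z.Nonempty := ⟨τ, hZτ⟩
    have hZbdd : BddBelow Z := ⟨0, fun t ht => ht.1⟩
    set τ₀ := sInf Z with hτ₀def
    have hτ₀nn : 0 ≤ τ₀ := le_csInf hZne fun t ht => ht.1
    have hτ₀mem : R τ₀ = 0 ∧ S τ₀ = 0 := by
      have hcl : τ₀ ∈ closure Z := csInf_mem_closure hZne hZbdd
      rcases mem_closure_iff_seq_limit.1 hcl with ⟨u, hu, hul⟩
      constructor
      · have h1 : Tendsto (fun n => R (u n)) atTop (𝓝 (R τ₀)) :=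
          ((hRdiff τ₀ hτ₀nn).continuousAt.tendsto).comp hul
        have h2 : (fun n => R (u n)) = fun _ => (0:ℝ) := funext fun n => (hu n).2.1
        rw [h2] at h1
        exact tendsto_nhds_unique h1 tendsto_const_nhds
      · have h1 : Tendsto (fun n => S (u n)) atTop (𝓝 (S τ₀)) :=
          ((hSdiff τ₀ hτ₀nn).continuousAt.tendsto).comp hul
        have h2 : (fun n => S (u n)) = fun _ => (0:ℝ) := funext fun n => (hu n).2.2
        rw [h2] at h1
        exact tendsto_nhds_unique h1 tendsto_const_nhds
    have hτ₀pos : 0 < τ₀ := by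
      rcases hτ₀nn.eq_or_lt with h | h
      · exfalso
        exact (hne_iff 0).1 h0 ⟨h ▸ hτ₀mem.1, h ▸ hτ₀mem.2⟩
      · exact h
    have halive : ∀ t, 0 ≤ t → t < τ₀ → (R t, S t) ≠ (0, 0) := by
      intro t ht hlt
      rw [hne_iff]
      rintro ⟨h1, h2⟩
      exact absurd (csInf_le hZbdd ⟨ht, h1, h2⟩) (not_le.2 hlt)
    -- S is antitone on [0, τ₀]
    have contS : ContinuousOn S (Icc 0 τ₀) := fun t ht =>
      (hSdiff t ht.1).continuousAt.continuousWithinAt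
    have contR : ContinuousOn R (Icc 0 τ₀) := fun t ht =>
      (hRdiff t ht.1).continuousAt.continuousWithinAt
    have Santi : AntitoneOn S (Icc 0 τ₀) := by
      apply antitoneOn_of_deriv_nonpos (convex_Icc 0 τ₀) contS
      · intro t ht
        rw [interior_Icc] at ht
        exact (hSdiff t ht.1.le).differentiableWithinAt
      · intro t ht
        rw [interior_Icc] at ht
        have hne := halive t ht.1.le ht.2
        rw [(hS t ht.1.le hne).deriv]
        have h1 : 0 ≤ kcf * R t ^ 2 / (R t ^ 2 + S t ^ 2) :=
          div_nonneg (by positivity) (hr2pos t hne).le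
        linarith
    -- S is positive on [0, τ₀)
    have hSpos : ∀ t, 0 ≤ t → t < τ₀ → 0 < S t := by
      intro t ht hlt
      have hge : 0 ≤ S t := by
        have := Santi ⟨ht, hlt.le⟩ ⟨hτ₀nn, le_refl τ₀⟩ hlt.le
        rw [hτ₀mem.2] at this
        exact this
      rcases hge.lt_or_eq with h | h
      · exact h
      · exfalso
        set t₂ := (t + τ₀) / 2 with ht₂def
        have h1 : t < t₂ := by simp only [ht₂def]; linarith
        have h2 : t₂ < τ₀ := by simp only [ht₂def]; linarith
        have ht₂nn : 0 ≤ t₂ := le_trans ht h1.le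
        have hS2 : ∀ s ∈ Ioo t τ₀, S s = 0 := by
          intro s hs
          have ha : S s ≤ S t :=
            Santi ⟨ht, hlt.le⟩ ⟨ht.trans hs.1.le, hs.2.le⟩ hs.1.le
          have hb : S τ₀ ≤ S s :=
            Santi ⟨ht.trans hs.1.le, hs.2.le⟩ ⟨hτ₀nn, le_refl τ₀⟩ hs.2.le
          rw [hτ₀mem.2] at hb
          rw [← h] at ha
          linarith
        have hev : (fun _ => (0:ℝ)) =ᶠ[𝓝 t₂] S := by
          filter_upwards [Ioo_mem_nhds h1 h2] with s hs
          exact (hS2 s hs).symm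
        have hne2 := halive t₂ ht₂nn h2
        have hd := hS t₂ ht₂nn hne2
        have hd0 : HasDerivAt S 0 t₂ :=
          (hasDerivAt_const t₂ (0:ℝ)).congr_of_eventuallyEq hev.symm
        have huniq : -(kcf * R t₂ ^ 2 / (R t₂ ^ 2 + S t₂ ^ 2)) = 0 := hd.unique hd0
        have hr2 : R t₂ ^ 2 + S t₂ ^ 2 ≠ 0 := (hr2pos t₂ hne2).ne'
        have hR2 : R t₂ = 0 := by
          have h' : kcf * R t₂ ^ 2 / (R t₂ ^ 2 + S t₂ ^ 2) = 0 := by linarith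
          rcases div_eq_zero_iff.1 h' with h'' | h''
          · rcases mul_eq_zero.1 h'' with h3 | h3
            · exact absurd h3 hkcf.ne'
            · exact pow_eq_zero_iff (two_ne_zero) |>.1 h3
          · exact absurd h'' hr2
        exact (hne_iff t₂).1 hne2 ⟨hR2, hS2 t₂ ⟨h1, h2⟩⟩
    have hS0pos : 0 < S 0 := hSpos 0 le_rfl hτ₀pos
    -- ε(0) = 0
    have hε0 : S 0 + c * R 0 = 0 := by
      by_contra hne0
      set E : Set ℝ := {t | t ∈ Icc 0 τ₀ ∧ S t + c * R t = 0} with hEdef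
      have hEτ₀ : τ₀ ∈ E := ⟨⟨hτ₀nn, le_refl τ₀⟩, by rw [hτ₀mem.1, hτ₀mem.2]; ring⟩
      have hEne : E.Nonempty := ⟨τ₀, hEτ₀⟩
      have hEbdd : BddBelow E := ⟨0, fun t ht => ht.1.1⟩
      set t₁ := sInf E with ht₁def
      have ht₁nn : 0 ≤ t₁ := le_csInf hEne fun t ht => ht.1.1
      have ht₁le : t₁ ≤ τ₀ := csInf_le hEbdd hEτ₀
      have ht₁mem : S t₁ + c * R t₁ = 0 := by
        have hcl : t₁ ∈ closure E := csInf_mem_closure hEne hEbdd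
        rcases mem_closure_iff_seq_limit.1 hcl with ⟨u, hu, hul⟩
        have h1 : Tendsto (fun n => S (u n) + c * R (u n)) atTop
            (𝓝 (S t₁ + c * R t₁)) := ((hεcont t₁ ht₁nn).tendsto).comp hul
        have h2 : (fun n => S (u n) + c * R (u n)) = fun _ => (0:ℝ) :=
          funext fun n => (hu n).2
        rw [h2] at h1
        exact tendsto_nhds_unique h1 tendsto_const_nhds
      have ht₁pos : 0 < t₁ := by
        rcases ht₁nn.eq_or_lt with h | h
        · exact absurd (h ▸ ht₁mem) hne0
        · exact h
      have hnz : ∀ s, 0 ≤ s → s < t₁ → S s + c * R s ≠ 0 := by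
        intro s hs hlt hzero
        exact absurd (csInf_le hEbdd ⟨⟨hs, le_trans hlt.le ht₁le⟩, hzero⟩)
          (not_le.2 hlt)
      have contε : ContinuousOn (fun t => S t + c * R t) (Icc 0 t₁) := fun s hs =>
        (hεcont s hs.1).continuousWithinAt
      rcases lt_or_gt_of_ne hne0 with hneg | hpos
      · -- ε 0 < 0 : ε strictly decreasing on [0,t₁], but ε t₁ = 0 > ε 0, contra
        have hsgn : ∀ s, 0 ≤ s → s < t₁ → S s + c * R s < 0 := by
          intro s hs hlt
          rcases lt_or_gt_of_ne (hnz s hs hlt) with h' | h'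
          · exact h'
          · exfalso
            obtain ⟨u, hu, hu0⟩ :=
              intermediate_value_Icc hs (contε.mono (Icc_subset_Icc_right hlt.le))
                (⟨hneg.le, h'.le⟩ : (0:ℝ) ∈ Icc (S 0 + c * R 0) (S s + c * R s))
            exact hnz u hu.1 (lt_of_le_of_lt hu.2 hlt) hu0
        have hanti : StrictAntiOn (fun t => S t + c * R t) (Icc 0 t₁) := by
          apply strictAntiOn_of_deriv_neg (convex_Icc 0 t₁) contε
          intro x hx
          rw [interior_Icc] at hx
          have hx0 : 0 ≤ x := hx.1.le
          have hxτ : x < τ₀ := lt_of_lt_of_le hx.2 ht₁le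
          have hnex := halive x hx0 hxτ
          rw [(hεderiv x hx0 hnex).deriv]
          have hA : 0 < kcf * S x / (R x ^ 2 + S x ^ 2) :=
            div_pos (mul_pos hkcf (hSpos x hx0 hxτ)) (hr2pos x hnex)
          exact mul_neg_of_pos_of_neg hA (hsgn x hx0 hx.2)
        have := hanti ⟨le_refl 0, ht₁nn⟩ ⟨ht₁nn, le_refl t₁⟩ ht₁pos
        simp only at this
        linarith [ht₁mem]
      · -- ε 0 > 0 : ε strictly increasing on [0,t₁], but ε t₁ = 0 < ε 0, contra
        have hsgn : ∀ s, 0 ≤ s → s < t₁ → 0 < S s + c * R s := by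
          intro s hs hlt
          rcases lt_or_gt_of_ne (hnz s hs hlt) with h' | h'
          · exfalso
            obtain ⟨u, hu, hu0⟩ :=
              intermediate_value_Icc' hs (contε.mono (Icc_subset_Icc_right hlt.le))
                (⟨h'.le, hpos.le⟩ : (0:ℝ) ∈ Icc (S s + c * R s) (S 0 + c * R 0))
            exact hnz u hu.1 (lt_of_le_of_lt hu.2 hlt) hu0
          · exact h'
        have hmono : StrictMonoOn (fun t => S t + c * R t) (Icc 0 t₁) := by
          apply strictMonoOn_of_deriv_pos (convex_Icc 0 t₁) contε
          intro x hx
          rw [interior_Icc] at hx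
          have hx0 : 0 ≤ x := hx.1.le
          have hxτ : x < τ₀ := lt_of_lt_of_le hx.2 ht₁le
          have hnex := halive x hx0 hxτ
          rw [(hεderiv x hx0 hnex).deriv]
          have hA : 0 < kcf * S x / (R x ^ 2 + S x ^ 2) :=
            div_pos (mul_pos hkcf (hSpos x hx0 hxτ)) (hr2pos x hnex)
          exact mul_pos hA (hsgn x hx0 hx.2)
        have := hmono ⟨le_refl 0, ht₁nn⟩ ⟨ht₁nn, le_refl t₁⟩ ht₁pos
        simp only at this
        linarith [ht₁mem]
    refine ⟨?_, hS0pos, hε0⟩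
    nlinarith
  · ------------------------------------------------------------------
    -- Backward direction: ray ⟹ collision
    ------------------------------------------------------------------
    rintro ⟨hR0neg, hS0pos, hε0⟩
    by_contra hno
    have halive : ∀ t : ℝ, 0 ≤ t → (R t, S t) ≠ (0, 0) := by
      intro t ht
      rcases ht.eq_or_lt with h | h
      · rwa [← h]
      · rw [hne_iff]
        rintro ⟨h1, h2⟩
        exact hno ⟨t, h, h1, h2⟩
    -- ε ≡ 0 on [0, ∞) by Grönwall
    have hεall : ∀ t : ℝ, 0 ≤ t → S t + c * R t = 0 := by
      intro t₀ ht₀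
      rcases ht₀.eq_or_lt with h | h
      · rwa [← h]
      have contR : ContinuousOn R (Icc 0 t₀) := fun s hs =>
        (hRdiff s hs.1).continuousAt.continuousWithinAt
      have contS : ContinuousOn S (Icc 0 t₀) := fun s hs =>
        (hSdiff s hs.1).continuousAt.continuousWithinAt
      have conta : ContinuousOn (fun s => kcf * S s / (R s ^ 2 + S s ^ 2)) (Icc 0 t₀) :=
        (continuousOn_const.mul contS).div
          ((contR.pow 2).add (contS.pow 2))
          (fun x hx => (hr2pos x (halive x hx.1)).ne')
      obtain ⟨C, hC⟩ := isCompact_Icc.exists_bound_of_continuousOn conta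
      have contε : ContinuousOn (fun s => S s + c * R s) (Icc 0 t₀) := fun s hs =>
        (hεcont s hs.1).continuousWithinAt
      have key := norm_le_gronwallBound_of_norm_deriv_right_le
        (f := fun s => S s + c * R s)
        (f' := fun s => kcf * S s / (R s ^ 2 + S s ^ 2) * (S s + c * R s))
        (δ := 0) (K := C) (ε := 0) (a := 0) (b := t₀)
        contε
        (fun x hx => (hεderiv x hx.1 (halive x hx.1)).hasDerivWithinAt)
        (by simp [hε0])
        (fun x hx => by
          rw [norm_mul, add_zero]
          exact mul_le_mul_of_nonneg_right (hC x ⟨hx.1, hx.2.le⟩) (norm_nonneg _))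
        t₀ ⟨ht₀, le_refl t₀⟩
      rw [sub_zero, gronwallBound_ε0_δ0] at key
      exact norm_le_zero_iff.1 key
    -- R never vanishes on [0, ∞)
    have hRne : ∀ t : ℝ, 0 ≤ t → R t ≠ 0 := by
      intro t ht hzero
      have hS0 : S t = 0 := by have := hεall t ht; rw [hzero] at this; linarith
      exact (hne_iff t).1 (halive t ht) ⟨hzero, hS0⟩
    -- on the ray, R' is the positive constant α
    set α : ℝ := v ^ 2 - kcf * c / (1 + c ^ 2) with hαdef
    have h1c : (0:ℝ) < 1 + c ^ 2 := by positivity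
    have hαpos : 0 < α := by
      rw [hαdef, sub_pos, div_lt_iff₀ h1c]
      nlinarith [hcv, sq_nonneg c]
    have hRd : ∀ t : ℝ, 0 ≤ t → HasDerivAt R α t := by
      intro t ht
      have hne := halive t ht
      have hd := hR t ht hne
      have hSt : S t = -(c * R t) := by have := hεall t ht; linarith
      have hRt : R t ≠ 0 := hRne t ht
      convert hd using 1
      rw [hSt, hαdef]
      have hden : R t ^ 2 + (-(c * R t)) ^ 2 ≠ 0 := by
        have := pow_two_pos_of_ne_zero hRt
        nlinarith [sq_nonneg (c * R t)]
      field_simp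
      ring
    -- hence R is affine, and reaches 0 at time τ = -R 0 / α > 0
    set τ : ℝ := -R 0 / α with hτdef
    have hτpos : 0 < τ := div_pos (neg_pos.2 hR0neg) hαpos
    have contR : ContinuousOn R (Icc 0 τ) := fun s hs =>
      (hRdiff s hs.1).continuousAt.continuousWithinAt
    have hg : ∀ x : ℝ, HasDerivAt (fun s : ℝ => R 0 + α * s) α x := by
      intro x
      simpa using ((hasDerivAt_id x).const_mul α).const_add (R 0)
    have heq := eq_of_has_deriv_right_eq (a := 0) (b := τ)
      (f := R) (f' := fun _ => α) (g := fun s : ℝ => R 0 + α * s)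
      (fun x hx => (hRd x hx.1).hasDerivWithinAt)
      (fun x _ => (hg x).hasDerivWithinAt)
      contR
      ((continuousOn_const.add (continuousOn_const.mul continuousOn_id)))
      (by simp)
    have hRτ : R τ = 0 := by
      have := heq τ ⟨hτpos.le, le_refl τ⟩
      rw [this, hτdef]
      field_simp
      ring
    exact hRne τ hτpos.le hRτ
end

section
/- Let R, S, c, cmin be real numbers with R < 0, S > 0, c ≥ cmin > 0 and S + c·R > 0. Then R·S/(R² + S²) ≥ −cmin/(cmin² + 1) if cmin ≥ 1, and R·S/(R² + S²) ≥ −1/2 if cmin < 1. -/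
/-- auxiliary Lemma of the paper: for reals `R < 0`, `S > 0`,
`c ≥ cmin > 0` with `S + c·R > 0`, the term `R·S/(R²+S²)` is bounded below by
`−cmin/(cmin²+1)` if `cmin ≥ 1`, and by `−1/2` if `cmin < 1`. -/
theorem RS_term_lower_bound
    (R S c cmin : ℝ) (hR : R < 0) (hS : 0 < S)
    (hc : cmin ≤ c) (hcmin : 0 < cmin) (heps : 0 < S + c * R) :
    (1 ≤ cmin → -(cmin / (cmin ^ 2 + 1)) ≤ R * S / (R ^ 2 + S ^ 2)) ∧
    (cmin < 1 → -(1 / 2) ≤ R * S / (R ^ 2 + S ^ 2)) := by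
  have hden : 0 < R ^ 2 + S ^ 2 := by positivity
  constructor
  · intro h1
    have h2 : 0 < S + cmin * R := by nlinarith
    have h3 : 0 < R + cmin * S := by nlinarith
    rw [← neg_div, div_le_div_iff₀ (by positivity) hden]
    nlinarith [mul_pos h2 h3]
  · intro _
    rw [← neg_div, div_le_div_iff₀ (by norm_num) hden]
    nlinarith [sq_nonneg (R + S)]
end

section
/- Suppose x follows the disturbed planar circular-field dynamics, and there exist constants dxmin, xmax > 0 such that ‖ẋ(t)‖ ≥ dxmin and ‖x(t)‖ ≤ xmax for all t ≥ 0, and the disturbance bound satisfies zmax ≤ dxmin²/xmax. If R(0) = x(0)·ẋ(0) ≥ 0, then for all t ≥ 0: R(t) ≥ 0 and ‖x(t)‖ ≥ ‖x(0)‖ (equivalently, the barrier V_B(t) = 1/‖x(t)‖² satisfies V_B(t) ≤ V_B(0)). -/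
set_option maxHeartbeats 1000000


open scoped RealInnerProductSpace

lemma cross_inner_self' (a c : EuclideanSpace ℝ (Fin 3)) :
    ⟪cross a c, cross a c⟫ = ⟪a,a⟫*⟪c,c⟫ - ⟪a,c⟫^2 := by
  simp [cross, PiLp.inner_apply, Fin.sum_univ_three, RCLike.inner_apply, conj_trivial]
  simp [EuclideanSpace.norm_sq_eq, Fin.sum_univ_three]
  ring

lemma norm_cross_le' (a c : EuclideanSpace ℝ (Fin 3)) : ‖cross a c‖ ≤ ‖a‖ * ‖c‖ := by
  have h := cross_inner_self' a c
  rw [real_inner_self_eq_norm_sq, real_inner_self_eq_norm_sq, real_inner_self_eq_norm_sq] at h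
  nlinarith [norm_nonneg (cross a c), norm_nonneg a, norm_nonneg c, sq_nonneg (⟪a,c⟫),
    mul_nonneg (norm_nonneg a) (norm_nonneg c)]

/-- Lemma 5 of the paper: under the disturbed planar circular-field
dynamics `ẍ = (kcf/(‖x‖²‖ẋ‖²))·(ẋ·x)·(ẋ×b) + z` with `‖z‖ ≤ zmax ≤ dxmin²/xmax`,
`‖ẋ‖ ≥ dxmin`, `‖x‖ ≤ xmax`: if `R(0) = x(0)·ẋ(0) ≥ 0`, then `R(t) ≥ 0` and
`‖x(t)‖ ≥ ‖x(0)‖` for all `t ≥ 0`. -/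
theorem cf_disturbed_R_nonneg
    (kcf zmax dxmin xmax : ℝ) (hkcf : 0 < kcf) (hzmax : 0 ≤ zmax)
    (hdxmin : 0 < dxmin) (hxmax : 0 < xmax)
    (b : EuclideanSpace ℝ (Fin 3)) (hb : ‖b‖ = 1)
    (x v a z : ℝ → EuclideanSpace ℝ (Fin 3))
    (hx : ∀ t, 0 ≤ t → HasDerivAt x (v t) t)
    (hv : ∀ t, 0 ≤ t → HasDerivAt v (a t) t)
    (hxne : ∀ t, 0 ≤ t → x t ≠ 0)
    (hvne : ∀ t, 0 ≤ t → v t ≠ 0)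
    (hbx : ∀ t, 0 ≤ t → ⟪b, x t⟫ = 0)
    (hbv : ∀ t, 0 ≤ t → ⟪b, v t⟫ = 0)
    (hbz : ∀ t, 0 ≤ t → ⟪b, z t⟫ = 0)
    (hz : ∀ t, 0 ≤ t → ‖z t‖ ≤ zmax)
    (hacc : ∀ t, 0 ≤ t →
      a t = (kcf / (‖x t‖ ^ 2 * ‖v t‖ ^ 2) * ⟪v t, x t⟫) • cross (v t) b + z t)
    (hvmin : ∀ t, 0 ≤ t → dxmin ≤ ‖v t‖)
    (hxbound : ∀ t, 0 ≤ t → ‖x t‖ ≤ xmax)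
    (hzbound : zmax ≤ dxmin ^ 2 / xmax)
    (hR0 : 0 ≤ ⟪x 0, v 0⟫) :
    ∀ t, 0 ≤ t → 0 ≤ ⟪x t, v t⟫ ∧ ‖x 0‖ ≤ ‖x t‖ := by
  -- continuity
  have hxcont : ∀ T : ℝ, ContinuousOn x (Set.Icc 0 T) := fun T u hu =>
    ((hx u hu.1).continuousAt).continuousWithinAt
  have hvcont : ∀ T : ℝ, ContinuousOn v (Set.Icc 0 T) := fun T u hu =>
    ((hv u hu.1).continuousAt).continuousWithinAt
  have hRcont : ∀ T : ℝ, ContinuousOn (fun u => ⟪x u, v u⟫) (Set.Icc 0 T) := fun T =>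
    (hxcont T).inner (hvcont T)
  -- derivative of R
  have hRderiv : ∀ t, 0 ≤ t →
      HasDerivAt (fun u => ⟪x u, v u⟫) (⟪x t, a t⟫ + ⟪v t, v t⟫) t := fun t ht =>
    HasDerivAt.inner ℝ (hx t ht) (hv t ht)
  -- xmax * zmax ≤ dxmin ^ 2
  have hxz : xmax * zmax ≤ dxmin ^ 2 := by
    rw [le_div_iff₀ hxmax] at hzbound; linarith
  -- key differential inequality at points where R ≤ 0
  have key : ∀ (m : ℝ), 0 < m → ∀ u, 0 ≤ u → ⟪x u, v u⟫ ≤ 0 → m ≤ ‖x u‖ →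
      -(⟪x u, a u⟫ + ⟪v u, v u⟫) ≤ kcf / (m * dxmin) * (-(⟪x u, v u⟫)) := by
    intro m hm u hu hr hmle
    have hnx : 0 < ‖x u‖ := norm_pos_iff.2 (hxne u hu)
    have hnv : dxmin ≤ ‖v u‖ := hvmin u hu
    have hnv0 : 0 < ‖v u‖ := lt_of_lt_of_le hdxmin hnv
    set nx := ‖x u‖
    set nv := ‖v u‖
    set r := ⟪x u, v u⟫ with hrdef
    have hau : ⟪x u, a u⟫ = kcf / (nx ^ 2 * nv ^ 2) * ⟪v u, x u⟫ * ⟪x u, cross (v u) b⟫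
        + ⟪x u, z u⟫ := by
      rw [hacc u hu, inner_add_right, real_inner_smul_right]
    have hvx : ⟪v u, x u⟫ = r := real_inner_comm _ _
    rw [hvx] at hau
    rw [hau]
    set T := ⟪x u, cross (v u) b⟫ with hTdef
    set ip := ⟪x u, z u⟫ with hipdef
    have hT : |T| ≤ nx * nv := by
      calc |T| ≤ ‖x u‖ * ‖cross (v u) b‖ := abs_real_inner_le_norm _ _
        _ ≤ nx * (nv * 1) := by
            exact mul_le_mul_of_nonneg_left (by simpa [hb] using norm_cross_le' (v u) b) hnx.le
        _ = nx * nv := by ring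
    have hT1 : T ≤ nx * nv := (abs_le.1 hT).2
    have hip : -(dxmin ^ 2) ≤ ip := by
      have h1 : |ip| ≤ ‖x u‖ * ‖z u‖ := abs_real_inner_le_norm _ _
      have h2 : ‖x u‖ * ‖z u‖ ≤ xmax * zmax :=
        mul_le_mul (hxbound u hu) (hz u hu) (norm_nonneg _) hxmax.le
      have := (abs_le.1 (h1.trans h2)).1
      linarith
    have hnv2 : dxmin ^ 2 ≤ ⟪v u, v u⟫ := by
      rw [real_inner_self_eq_norm_sq]
      exact pow_le_pow_left₀ hdxmin.le hnv 2
    set c₀ := kcf / (nx ^ 2 * nv ^ 2) with hc0def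
    set K := kcf / (m * dxmin) with hKdef
    have hc0 : 0 ≤ c₀ := by positivity
    have hc0k : c₀ * (nx ^ 2 * nv ^ 2) = kcf := by
      rw [hc0def]; field_simp
    have hKk : K * (m * dxmin) = kcf := by
      rw [hKdef]; field_simp
    have hmd : m * dxmin ≤ nx * nv := mul_le_mul hmle hnv hdxmin.le hnx.le
    have hstep : c₀ * (nx * nv) ≤ K := by
      nlinarith [mul_nonneg hc0 (mul_nonneg hnx.le hnv0.le), mul_pos hm hdxmin]
    have h4 : c₀ * (-r) * T ≤ c₀ * (-r) * (nx * nv) :=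
      mul_le_mul_of_nonneg_left hT1 (mul_nonneg hc0 (neg_nonneg.2 hr))
    have h5 : c₀ * (-r) * (nx * nv) ≤ K * (-r) := by
      nlinarith [mul_le_mul_of_nonneg_right hstep (neg_nonneg.2 hr)]
    nlinarith [h4.trans h5]
  -- Step 1: R stays nonnegative
  have hR : ∀ t, 0 ≤ t → 0 ≤ ⟪x t, v t⟫ := by
    intro t₀ ht₀
    by_contra hneg
    push_neg at hneg
    -- minimum of ‖x‖ on [0, t₀]
    obtain ⟨tm, htm, hmin⟩ := isCompact_Icc.exists_isMinOn (s := Set.Icc (0:ℝ) t₀)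
      ⟨0, Set.left_mem_Icc.2 ht₀⟩ ((hxcont t₀).norm)
    set m := ‖x tm‖ with hmdef
    have hm : 0 < m := norm_pos_iff.2 (hxne tm htm.1)
    have hmle : ∀ u ∈ Set.Icc (0:ℝ) t₀, m ≤ ‖x u‖ := fun u hu => hmin hu
    set K := kcf / (m * dxmin) with hKdef
    -- the set where R ≥ 0
    set S := Set.Icc (0:ℝ) t₀ ∩ (fun u => ⟪x u, v u⟫) ⁻¹' Set.Ici 0 with hSdef
    have hSclosed : IsClosed S :=
      (hRcont t₀).preimage_isClosed_of_isClosed isClosed_Icc isClosed_Ici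
    have hScompact : IsCompact S :=
      isCompact_Icc.of_isClosed_subset hSclosed Set.inter_subset_left
    have h0S : (0:ℝ) ∈ S := ⟨Set.left_mem_Icc.2 ht₀, hR0⟩
    obtain ⟨s, hsS, hsub⟩ := hScompact.exists_isGreatest ⟨0, h0S⟩
    have hs0 : 0 ≤ s := hsS.1.1
    have hst : s ≤ t₀ := hsS.1.2
    have hslt : s < t₀ := by
      rcases lt_or_eq_of_le hst with h | h
      · exact h
      · exact absurd (h ▸ hsS.2 : (0:ℝ) ≤ ⟪x t₀, v t₀⟫) (not_le.2 hneg)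
    have hRneg : ∀ u ∈ Set.Ioc s t₀, ⟪x u, v u⟫ < 0 := by
      intro u hu
      by_contra h
      push_neg at h
      exact absurd (hsub ⟨⟨le_trans hs0 hu.1.le, hu.2⟩, h⟩) (not_le.2 hu.1)
    set g : ℝ → ℝ := fun u => -(⟪x u, v u⟫) * Real.exp (-K * u) with hgdef
    have hgderiv : ∀ u ∈ Set.Ioo s t₀, HasDerivAt g
        (-(⟪x u, a u⟫ + ⟪v u, v u⟫) * Real.exp (-K * u)
          + -(⟪x u, v u⟫) * (-K * Real.exp (-K * u))) u := by
      intro u hu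
      have hu0 : 0 ≤ u := le_trans hs0 hu.1.le
      have h1 : HasDerivAt (fun w => -(⟪x w, v w⟫)) (-(⟪x u, a u⟫ + ⟪v u, v u⟫)) u :=
        (hRderiv u hu0).neg
      have h2 : HasDerivAt (fun w => Real.exp (-K * w)) (-K * Real.exp (-K * u)) u := by
        have := (((hasDerivAt_id u).const_mul (-K)).exp)
        simpa [mul_comm] using this
      exact h1.mul h2
    have hganti : AntitoneOn g (Set.Icc s t₀) := by
      apply antitoneOn_of_deriv_nonpos (convex_Icc s t₀)
      · exact (((hRcont t₀).mono (Set.Icc_subset_Icc hs0 le_rfl)).neg).mul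
          ((Real.continuous_exp.comp (continuous_const.mul continuous_id)).continuousOn)
      · rw [interior_Icc]
        exact fun u hu => ((hgderiv u hu).differentiableAt).differentiableWithinAt
      · intro u hu
        rw [interior_Icc] at hu
        rw [(hgderiv u hu).deriv]
        have hu0 : 0 ≤ u := le_trans hs0 hu.1.le
        have hk := key m hm u hu0 (hRneg u ⟨hu.1, hu.2.le⟩).le (hmle u ⟨hu0, hu.2.le⟩)
        nlinarith [Real.exp_pos (-K * u),
          mul_le_mul_of_nonneg_right hk (Real.exp_pos (-K * u)).le]
    have h1 : g t₀ ≤ g s :=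
      hganti (Set.left_mem_Icc.2 hslt.le) (Set.right_mem_Icc.2 hslt.le) hslt.le
    have hgs : g s ≤ 0 :=
      mul_nonpos_of_nonpos_of_nonneg (neg_nonpos.2 hsS.2) (Real.exp_pos _).le
    have hgt : 0 < g t₀ := mul_pos (neg_pos.2 hneg) (Real.exp_pos _)
    linarith
  -- Step 2: norm monotone
  intro t ht
  refine ⟨hR t ht, ?_⟩
  have hNderiv : ∀ u, 0 ≤ u →
      HasDerivAt (fun w => ⟪x w, x w⟫) (⟪x u, v u⟫ + ⟪v u, x u⟫) u := fun u hu =>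
    HasDerivAt.inner ℝ (hx u hu) (hx u hu)
  have hmono : MonotoneOn (fun w => ⟪x w, x w⟫) (Set.Icc 0 t) := by
    apply monotoneOn_of_deriv_nonneg (convex_Icc 0 t)
    · exact (hxcont t).inner (hxcont t)
    · rw [interior_Icc]
      exact fun u hu => ((hNderiv u hu.1.le).differentiableAt).differentiableWithinAt
    · intro u hu
      rw [interior_Icc] at hu
      rw [(hNderiv u hu.1.le).deriv]
      have := hR u hu.1.le
      have h2 : ⟪v u, x u⟫ = ⟪x u, v u⟫ := real_inner_comm _ _
      linarith
  have hle : ⟪x 0, x 0⟫ ≤ ⟪x t, x t⟫ :=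
    hmono (Set.left_mem_Icc.2 ht) (Set.right_mem_Icc.2 ht) ht
  rw [real_inner_self_eq_norm_sq, real_inner_self_eq_norm_sq] at hle
  nlinarith [norm_nonneg (x 0), norm_nonneg (x t)]
end

section
/- Let x : [0,∞) → ℝ³ be twice differentiable, F : [0,∞) → ℝ³ satisfy F(t)·ẋ(t) = 0 for all t ≥ 0, and kVLC : [0,∞) → ℝ satisfy kVLC(t) ≥ 0 for all t. Suppose ẍ(t) = F(t) + kVLC(t)·F_VLC(t) for all t ≥ 0. If ‖ẋ(0)‖ ≤ dxmax, then ‖ẋ(t)‖ ≤ dxmax for all t ≥ 0. -/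
open scoped RealInnerProductSpace
open Classical

/-- The desired velocity of the velocity-limiting controller (VLC). -/
noncomputable def vd (kp kv : ℝ) (xg p : EuclideanSpace ℝ (Fin 3)) :
    EuclideanSpace ℝ (Fin 3) :=
  (kp / kv) • (xg - p)

/-- The VLC scaling factor `ν = min(1, dxmax/‖v_d‖)` (with `ν = 1` when `v_d = 0`). -/
noncomputable def nu (dxmax : ℝ) (w : EuclideanSpace ℝ (Fin 3)) : ℝ :=
  if w = 0 then 1 else min 1 (dxmax / ‖w‖)

/-- The VLC force `F_VLC = −kv·(ẋ − ν·v_d)`. -/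
noncomputable def FVLC (kp kv dxmax : ℝ) (xg p w : EuclideanSpace ℝ (Fin 3)) :
    EuclideanSpace ℝ (Fin 3) :=
  (-kv) • (w - nu dxmax (vd kp kv xg p) • vd kp kv xg p)

lemma nu_nonneg (dxmax : ℝ) (hd : 0 < dxmax) (w : EuclideanSpace ℝ (Fin 3)) :
    0 ≤ nu dxmax w := by
  unfold nu
  split_ifs with h
  · norm_num
  · have : 0 < ‖w‖ := norm_pos_iff.mpr h
    positivity

lemma nu_mul_norm_le (dxmax : ℝ) (hd : 0 < dxmax) (w : EuclideanSpace ℝ (Fin 3)) :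
    nu dxmax w * ‖w‖ ≤ dxmax := by
  unfold nu
  split_ifs with h
  · simp [h, hd.le]
  · have hw : 0 < ‖w‖ := norm_pos_iff.mpr h
    have h1 : min 1 (dxmax / ‖w‖) * ‖w‖ ≤ (dxmax / ‖w‖) * ‖w‖ :=
      mul_le_mul_of_nonneg_right (min_le_right _ _) hw.le
    rw [div_mul_cancel₀ _ hw.ne'] at h1
    exact h1

/-- Proposition 1 of the paper: under the combined dynamics
`ẍ = F + kVLC·F_VLC` with `F ⊥ ẋ` and `kVLC ≥ 0`, if `‖ẋ(0)‖ ≤ dxmax` then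
`‖ẋ(t)‖ ≤ dxmax` for all `t ≥ 0`. -/
theorem vlc_max_speed_invariant
    (kp kv dxmax : ℝ) (hkp : 0 < kp) (hkv : 0 < kv) (hdxmax : 0 < dxmax)
    (xg : EuclideanSpace ℝ (Fin 3))
    (x v a F : ℝ → EuclideanSpace ℝ (Fin 3)) (kVLC : ℝ → ℝ)
    (hx : ∀ t, 0 ≤ t → HasDerivAt x (v t) t)
    (hv : ∀ t, 0 ≤ t → HasDerivAt v (a t) t)
    (hF : ∀ t, 0 ≤ t → ⟪F t, v t⟫ = 0)
    (hk : ∀ t, 0 ≤ t → 0 ≤ kVLC t)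
    (hacc : ∀ t, 0 ≤ t →
      a t = F t + kVLC t • FVLC kp kv dxmax xg (x t) (v t))
    (h0 : ‖v 0‖ ≤ dxmax) :
    ∀ t, 0 ≤ t → ‖v t‖ ≤ dxmax := by
  set f : ℝ → ℝ := fun s => ⟪v s, v s⟫ with hf_def
  -- derivative of f
  have hderiv : ∀ s, 0 ≤ s → HasDerivAt f (2 * ⟪v s, a s⟫) s := by
    intro s hs
    have h := (hv s hs).inner ℝ (hv s hs)
    have : ⟪v s, a s⟫ + ⟪a s, v s⟫ = 2 * ⟪v s, a s⟫ := by
      rw [real_inner_comm (a s) (v s)]; ring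
    rw [this] at h
    exact h
  -- the derivative is nonpositive whenever f s > dxmax^2
  have hbound : ∀ s, 0 ≤ s → dxmax ^ 2 < f s → 2 * ⟪v s, a s⟫ ≤ 0 := by
    intro s hs hfs
    have hnv : dxmax < ‖v s‖ := by
      by_contra h
      push_neg at h
      have : f s ≤ dxmax ^ 2 := by
        rw [hf_def]
        simp only [real_inner_self_eq_norm_sq]
        exact pow_le_pow_left₀ (norm_nonneg _) h 2
      linarith
    have hinner : ⟪v s, a s⟫ ≤ 0 := by
      have hF' : ⟪v s, F s⟫ = 0 := by rw [real_inner_comm]; exact hF s hs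
      rw [hacc s hs, inner_add_right, hF', real_inner_smul_right]
      simp only [zero_add]
      apply mul_nonpos_of_nonneg_of_nonpos (hk s hs)
      -- ⟪v s, FVLC⟫ ≤ 0
      set w := vd kp kv xg (x s) with hw
      have : ⟪v s, FVLC kp kv dxmax xg (x s) (v s)⟫
          = -kv * (⟪v s, v s⟫ - nu dxmax w * ⟪v s, w⟫) := by
        rw [FVLC, real_inner_smul_right, inner_sub_right, real_inner_smul_right]
      rw [this]
      apply mul_nonpos_of_nonpos_of_nonneg (by linarith)
      have h1 : nu dxmax w * ⟪v s, w⟫ ≤ dxmax * ‖v s‖ := by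
        calc nu dxmax w * ⟪v s, w⟫ ≤ nu dxmax w * (‖v s‖ * ‖w‖) := by
              apply mul_le_mul_of_nonneg_left _ (nu_nonneg dxmax hdxmax w)
              exact real_inner_le_norm _ _
          _ = (nu dxmax w * ‖w‖) * ‖v s‖ := by ring
          _ ≤ dxmax * ‖v s‖ :=
              mul_le_mul_of_nonneg_right (nu_mul_norm_le dxmax hdxmax w) (norm_nonneg _)
      have h2 : dxmax * ‖v s‖ ≤ ‖v s‖ * ‖v s‖ :=
        mul_le_mul_of_nonneg_right hnv.le (norm_nonneg _)
      have h3 : ⟪v s, v s⟫ = ‖v s‖ * ‖v s‖ := real_inner_self_eq_norm_mul_norm _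
      linarith
    linarith
  -- main comparison: f t ≤ dxmax^2 for all t ≥ 0
  have key : ∀ t, 0 ≤ t → f t ≤ dxmax ^ 2 := by
    intro t ht
    have hε : ∀ ε > (0:ℝ), f t ≤ dxmax ^ 2 + ε * (t + 1) := by
      intro ε hε
      have := image_le_of_deriv_right_lt_deriv_boundary
        (f := f) (f' := fun s => 2 * ⟪v s, a s⟫) (a := 0) (b := t)
        (B := fun s => dxmax ^ 2 + ε * (s + 1)) (B' := fun _ => ε)
        ?_ ?_ ?_ ?_ ?_ (Set.right_mem_Icc.mpr ht)
      · exact this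
      · intro s hs
        exact (hderiv s hs.1).continuousAt.continuousWithinAt
      · intro s hs
        exact (hderiv s hs.1).hasDerivWithinAt
      · have h00 : f 0 ≤ dxmax ^ 2 := by
          rw [hf_def]
          simp only [real_inner_self_eq_norm_sq]
          exact pow_le_pow_left₀ (norm_nonneg _) h0 2
        show f 0 ≤ dxmax ^ 2 + ε * (0 + 1)
        linarith
      · intro s
        have : HasDerivAt (fun u : ℝ => dxmax ^ 2 + ε * (u + 1)) (ε * 1) s := by
          exact ((hasDerivAt_id s).add_const 1).const_mul ε |>.const_add (dxmax ^ 2)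
        simpa using this
      · intro s hs heq
        have heq' : f s = dxmax ^ 2 + ε * (s + 1) := heq
        have hlt : dxmax ^ 2 < f s := by nlinarith [hs.1]
        have hb := hbound s hs.1 hlt
        show 2 * ⟪v s, a s⟫ < ε
        linarith
    refine le_of_forall_pos_le_add ?_
    intro ε hε'
    have ht1 : (0:ℝ) < t + 1 := by linarith
    have h1 := hε (ε / (t + 1)) (by positivity)
    have h2 : ε / (t + 1) * (t + 1) = ε := div_mul_cancel₀ _ ht1.ne'
    linarith
  intro t ht
  have := key t ht
  rw [hf_def] at this
  simp only [real_inner_self_eq_norm_sq] at this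
  nlinarith [norm_nonneg (v t)]
end

section
/- Let x : [0,∞) → ℝ³ be twice differentiable, F : [0,∞) → ℝ³ satisfy F(t)·ẋ(t) = 0 for all t, let dxmin > 0 and ξ > 0, and define kVLC(t) = 0 if (ẋ(t)·F_VLC(t) ≤ 0 and ‖ẋ(t)‖ ≤ dxmin and ‖xg − x(t)‖ > ξ), and kVLC(t) = 1 otherwise. Suppose ẍ(t) = F(t) + kVLC(t)·F_VLC(t) for all t, and let τ > 0 be such that ‖xg − x(t)‖ > ξ for all t ∈ [0, τ]. If ‖ẋ(0)‖ > dxmin, then ‖ẋ(t)‖ ≥ dxmin for all t ∈ [0, τ]. -/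
open scoped RealInnerProductSpace
open Classical

/-- Proposition 2 of the paper: with the goal-force scaling
`kVLC(t) = 0` iff (`ẋ·F_VLC ≤ 0`, `‖ẋ‖ ≤ dxmin` and `‖xg − x‖ > ξ`), and `kVLC(t) = 1`
otherwise, under `ẍ = F + kVLC·F_VLC` with `F ⊥ ẋ`: if `‖xg − x(t)‖ > ξ` on `[0, τ]`
and `‖ẋ(0)‖ > dxmin`, then `‖ẋ(t)‖ ≥ dxmin` on `[0, τ]`. -/
theorem vlc_min_speed_maintained
    (kp kv dxmax dxmin ξ : ℝ) (hkp : 0 < kp) (hkv : 0 < kv) (hdxmax : 0 < dxmax)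
    (hdxmin : 0 < dxmin) (hξ : 0 < ξ)
    (xg : EuclideanSpace ℝ (Fin 3))
    (x v a F : ℝ → EuclideanSpace ℝ (Fin 3)) (kVLC : ℝ → ℝ)
    (hx : ∀ t, 0 ≤ t → HasDerivAt x (v t) t)
    (hv : ∀ t, 0 ≤ t → HasDerivAt v (a t) t)
    (hF : ∀ t, 0 ≤ t → ⟪F t, v t⟫ = 0)
    (hk : ∀ t, kVLC t =
      if ⟪v t, FVLC kp kv dxmax xg (x t) (v t)⟫ ≤ 0 ∧ ‖v t‖ ≤ dxmin ∧ ξ < ‖xg - x t‖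
      then 0 else 1)
    (hacc : ∀ t, 0 ≤ t →
      a t = F t + kVLC t • FVLC kp kv dxmax xg (x t) (v t))
    (τ : ℝ) (hτ : 0 < τ)
    (hfar : ∀ t ∈ Set.Icc (0 : ℝ) τ, ξ < ‖xg - x t‖)
    (h0 : dxmin < ‖v 0‖) :
    ∀ t ∈ Set.Icc (0 : ℝ) τ, dxmin ≤ ‖v t‖ := by
  by_contra hcon
  push_neg at hcon
  obtain ⟨t1, ht1, hvt1⟩ := hcon
  -- g is the squared speed (as inner product)
  set g : ℝ → ℝ := fun t => ⟪v t, v t⟫ with hg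
  have hgder : ∀ t, 0 ≤ t → HasDerivAt g (⟪v t, a t⟫ + ⟪a t, v t⟫) t := fun t ht =>
    HasDerivAt.inner ℝ (hv t ht) (hv t ht)
  -- key sign lemma
  have key : ∀ t, 0 ≤ t → t ≤ τ → ‖v t‖ ≤ dxmin → 0 ≤ ⟪v t, a t⟫ := by
    intro t ht0 htτ hvle
    have hfar' := hfar t ⟨ht0, htτ⟩
    have : ⟪v t, a t⟫ = kVLC t * ⟪v t, FVLC kp kv dxmax xg (x t) (v t)⟫ := by
      rw [hacc t ht0, inner_add_right, real_inner_smul_right, real_inner_comm, hF t ht0,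
        zero_add]
    rw [this, hk t]
    by_cases hle : ⟪v t, FVLC kp kv dxmax xg (x t) (v t)⟫ ≤ 0
    · rw [if_pos ⟨hle, hvle, hfar'⟩]; simp
    · rw [if_neg (by tauto)]
      push_neg at hle
      linarith
  -- the set where speed is at least dxmin
  set S : Set ℝ := {t | t ∈ Set.Icc (0:ℝ) t1 ∧ dxmin ≤ ‖v t‖} with hS
  have h0S : (0:ℝ) ∈ S := ⟨⟨le_refl 0, ht1.1⟩, h0.le⟩
  have hSne : S.Nonempty := ⟨0, h0S⟩
  have hSbdd : BddAbove S := ⟨t1, fun t htS => htS.1.2⟩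
  set s := sSup S with hsdef
  have hs0 : 0 ≤ s := le_csSup hSbdd h0S
  have hst1 : s ≤ t1 := csSup_le hSne fun t htS => htS.1.2
  have hsτ : s ≤ τ := hst1.trans ht1.2
  -- continuity of speed at nonneg points
  have hcontv : ∀ t, 0 ≤ t → ContinuousAt (fun t => ‖v t‖) t := fun t ht =>
    (continuous_norm.continuousAt).comp (hv t ht).continuousAt
  -- dxmin ≤ ‖v s‖
  have hvs : dxmin ≤ ‖v s‖ := by
    have hcl : s ∈ closure S := (isLUB_csSup hSne hSbdd).mem_closure hSne
    have hne : (nhdsWithin s S).NeBot := mem_closure_iff_nhdsWithin_neBot.mp hcl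
    have htend : Filter.Tendsto (fun t => ‖v t‖) (nhdsWithin s S) (nhds ‖v s‖) :=
      ((hcontv s hs0).continuousWithinAt (s := S)).tendsto
    exact ge_of_tendsto htend
      (Filter.eventually_of_mem self_mem_nhdsWithin fun t htS => htS.2)
  have hslt : s < t1 := by
    rcases hst1.lt_or_eq with h | h
    · exact h
    · rw [h] at hvs; exact absurd hvs (not_le.mpr hvt1)
  -- on (s, t1], speed < dxmin
  have hsmall : ∀ t, s < t → t ≤ t1 → ‖v t‖ < dxmin := by
    intro t hst htt1
    by_contra hge
    push_neg at hge
    exact absurd (le_csSup hSbdd ⟨⟨hs0.trans hst.le, htt1⟩, hge⟩) (not_le.mpr hst)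
  -- g is monotone on [s, t1]
  have hmono : MonotoneOn g (Set.Icc s t1) := by
    apply monotoneOn_of_deriv_nonneg (convex_Icc s t1)
    · intro t htI
      exact ((hgder t (hs0.trans htI.1)).continuousAt).continuousWithinAt
    · rw [interior_Icc]
      intro t htI
      exact ((hgder t (hs0.trans htI.1.le)).differentiableAt).differentiableWithinAt
    · rw [interior_Icc]
      intro t htI
      have ht0 : 0 ≤ t := hs0.trans htI.1.le
      rw [(hgder t ht0).deriv]
      have := key t ht0 (htI.2.le.trans ht1.2) (hsmall t htI.1 htI.2.le).le
      have h2 := real_inner_comm (a t) (v t)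
      linarith
  have h1 : g s ≤ g t1 := hmono ⟨le_refl s, hst1⟩ ⟨hst1, le_refl t1⟩ hst1
  have hgs : dxmin ^ 2 ≤ g s := by
    rw [hg]; simp only []
    rw [real_inner_self_eq_norm_sq]
    exact pow_le_pow_left₀ hdxmin.le hvs 2
  have hgt1 : g t1 < dxmin ^ 2 := by
    rw [hg]; simp only []
    rw [real_inner_self_eq_norm_sq]
    exact pow_lt_pow_left₀ hvt1 (norm_nonneg _) (by norm_num)
  linarith
end

section
/- Let x : [0,∞) → ℝ³ be twice differentiable and F : [0,∞) → ℝ³ satisfy F(t)·ẋ(t) = 0 for all t ≥ 0, and suppose ẍ(t) = F(t) − ∇U(x(t)) − kv·ẋ(t) for all t ≥ 0. Then the energy function V(t) = ½‖ẋ(t)‖² + U(x(t)) is differentiable with V'(t) = −kv·‖ẋ(t)‖² for all t ≥ 0; in particular V is nonincreasing along the trajectory. -/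
open scoped RealInnerProductSpace
open Classical

/-- The Huber potential `U` centred at the goal `xg`. -/
noncomputable def huberU (kp kv dxmax : ℝ) (xg p : EuclideanSpace ℝ (Fin 3)) : ℝ :=
  if ‖p - xg‖ < kv * dxmax / kp then kp / 2 * ‖p - xg‖ ^ 2
  else kv * dxmax * ‖p - xg‖ - kv ^ 2 * dxmax ^ 2 / (2 * kp)

/-- The gradient of the Huber potential `U`. -/
noncomputable def gradHuberU (kp kv dxmax : ℝ) (xg p : EuclideanSpace ℝ (Fin 3)) :
    EuclideanSpace ℝ (Fin 3) :=
  if ‖p - xg‖ < kv * dxmax / kp then kp • (p - xg)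
  else (kv * dxmax / ‖p - xg‖) • (p - xg)

/-- Derivative of `u ↦ (min u 0)^2`. -/
lemma psi_hasDerivAt (u : ℝ) :
    HasDerivAt (fun s : ℝ => (min s 0) ^ 2) (2 * min u 0) u := by
  rcases lt_trichotomy u 0 with h | h | h
  · have hev : (fun s : ℝ => (min s 0) ^ 2) =ᶠ[nhds u] fun s : ℝ => s ^ 2 := by
      filter_upwards [Iio_mem_nhds h] with s hs
      rw [min_eq_left (le_of_lt (Set.mem_Iio.mp hs))]
    have h2 := (hasDerivAt_pow 2 u).congr_of_eventuallyEq hev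
    simpa [min_eq_left h.le, mul_comm] using h2
  · subst h
    rw [hasDerivAt_iff_isLittleO]
    simp only [min_self, ne_eq, OfNat.ofNat_ne_zero, not_false_eq_true, zero_pow, sub_zero,
      smul_eq_mul, mul_zero, smul_zero]
    have hO : (fun s : ℝ => (min s 0) ^ 2) =O[nhds (0:ℝ)] fun s : ℝ => s ^ 2 := by
      apply Asymptotics.IsBigO.of_bound 1
      filter_upwards with s
      rw [one_mul, Real.norm_eq_abs, Real.norm_eq_abs, abs_pow, abs_pow, sq_abs, sq_abs]
      rcases le_or_gt s 0 with hs | hs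
      · rw [min_eq_left hs]
      · rw [min_eq_right hs.le]
        nlinarith
    exact hO.trans_isLittleO (Asymptotics.isLittleO_pow_id one_lt_two)
  · have hev : (fun s : ℝ => (min s 0) ^ 2) =ᶠ[nhds u] fun _ : ℝ => (0:ℝ) := by
      filter_upwards [Ioi_mem_nhds h] with s hs
      rw [min_eq_right (le_of_lt (Set.mem_Ioi.mp hs)), zero_pow]
      norm_num
    have h2 := (hasDerivAt_const u (0:ℝ)).congr_of_eventuallyEq hev
    simpa [min_eq_right h.le] using h2

/-- Global rewriting of the Huber potential as a smooth-looking expression. -/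
lemma huberU_eq (kp kv dxmax : ℝ) (hkp : 0 < kp) (xg p : EuclideanSpace ℝ (Fin 3)) :
    huberU kp kv dxmax xg p =
      kv * dxmax * ‖p - xg‖ - kv ^ 2 * dxmax ^ 2 / (2 * kp) +
        kp / 2 * (min (‖p - xg‖ - kv * dxmax / kp) 0) ^ 2 := by
  unfold huberU
  split_ifs with h
  · rw [min_eq_left (by linarith)]
    field_simp
    ring
  · rw [min_eq_right (by push_neg at h; linarith)]
    ring

/-- Derivative of the norm of a moving point. -/
lemma norm_hasDerivAt {x v : ℝ → EuclideanSpace ℝ (Fin 3)} {xg : EuclideanSpace ℝ (Fin 3)}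
    {t : ℝ} (hx : HasDerivAt x (v t) t) (hne : x t - xg ≠ 0) :
    HasDerivAt (fun s => ‖x s - xg‖) (⟪x t - xg, v t⟫ / ‖x t - xg‖) t := by
  have hq : HasDerivAt (fun s => x s - xg) (v t) t := hx.sub_const xg
  have hg : HasDerivAt (fun s => ⟪x s - xg, x s - xg⟫) (2 * ⟪x t - xg, v t⟫) t := by
    have h2 := hq.inner ℝ hq
    refine h2.congr_deriv ?_
    rw [real_inner_comm (x t - xg) (v t)]
    ring
  have hg0 : ⟪x t - xg, x t - xg⟫ ≠ (0:ℝ) := inner_self_ne_zero.mpr hne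
  have h3 := (Real.hasDerivAt_sqrt hg0).comp t hg
  have heq : (Real.sqrt ∘ fun s => ⟪x s - xg, x s - xg⟫) = fun s => ‖x s - xg‖ := by
    funext s
    simp only [Function.comp_apply]
    rw [real_inner_self_eq_norm_sq, Real.sqrt_sq (norm_nonneg _)]
  rw [heq] at h3
  refine h3.congr_deriv ?_
  rw [real_inner_self_eq_norm_sq, Real.sqrt_sq (norm_nonneg _)]
  have : ‖x t - xg‖ ≠ 0 := norm_ne_zero_iff.mpr hne
  field_simp
/-- Chain rule for the Huber potential along a trajectory. -/
lemma huberU_comp_hasDerivAt (kp kv dxmax : ℝ) (hkp : 0 < kp) (hkv : 0 < kv)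
    (hdxmax : 0 < dxmax) (xg : EuclideanSpace ℝ (Fin 3))
    {x v : ℝ → EuclideanSpace ℝ (Fin 3)} {t : ℝ} (hx : HasDerivAt x (v t) t) :
    HasDerivAt (fun s => huberU kp kv dxmax xg (x s))
      ⟪gradHuberU kp kv dxmax xg (x t), v t⟫ t := by
  have hrpos : 0 < kv * dxmax / kp := by positivity
  rcases lt_or_ge ‖x t - xg‖ (kv * dxmax / kp) with h | h
  · -- inner region: locally the quadratic
    have hq : HasDerivAt (fun s => x s - xg) (v t) t := hx.sub_const xg
    have hg : HasDerivAt (fun s => kp / 2 * ⟪x s - xg, x s - xg⟫) (kp * ⟪x t - xg, v t⟫) t := by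
      have h2 := (hq.inner ℝ hq).const_mul (kp / 2)
      refine h2.congr_deriv ?_
      rw [real_inner_comm (x t - xg) (v t)]
      ring
    have hcont : ContinuousAt (fun s => ‖x s - xg‖) t :=
      (hx.continuousAt.sub continuousAt_const).norm
    have hev : (fun s => huberU kp kv dxmax xg (x s)) =ᶠ[nhds t]
        fun s => kp / 2 * ⟪x s - xg, x s - xg⟫ := by
      filter_upwards [hcont.preimage_mem_nhds (Iio_mem_nhds h)] with s hs
      simp only [Set.mem_preimage, Set.mem_Iio] at hs
      simp only [huberU, if_pos hs, real_inner_self_eq_norm_sq]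
    have h3 := hg.congr_of_eventuallyEq hev
    refine h3.congr_deriv ?_
    simp only [gradHuberU, if_pos h]
    rw [real_inner_smul_left]
  · -- outer region including the boundary
    have hne : x t - xg ≠ 0 := by
      intro h0
      rw [h0, norm_zero] at h
      linarith
    have hn := norm_hasDerivAt hx hne
    have hψ : HasDerivAt
        (fun s => kp / 2 * (min (‖x s - xg‖ - kv * dxmax / kp) 0) ^ 2) 0 t := by
      have h1 := (psi_hasDerivAt (‖x t - xg‖ - kv * dxmax / kp)).comp t
        (hn.sub_const (kv * dxmax / kp))
      have h2 := h1.const_mul (kp / 2)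
      have hmin : min (‖x t - xg‖ - kv * dxmax / kp) 0 = 0 := min_eq_right (by linarith)
      simpa [Function.comp, hmin] using h2
    have htot : HasDerivAt
        (fun s => kv * dxmax * ‖x s - xg‖ - kv ^ 2 * dxmax ^ 2 / (2 * kp) +
          kp / 2 * (min (‖x s - xg‖ - kv * dxmax / kp) 0) ^ 2)
        (kv * dxmax * (⟪x t - xg, v t⟫ / ‖x t - xg‖) + 0) t :=
      (((hn.const_mul (kv * dxmax)).sub_const _).add hψ)
    have heq : (fun s => kv * dxmax * ‖x s - xg‖ - kv ^ 2 * dxmax ^ 2 / (2 * kp) +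
          kp / 2 * (min (‖x s - xg‖ - kv * dxmax / kp) 0) ^ 2) =
        fun s => huberU kp kv dxmax xg (x s) := by
      funext s
      rw [huberU_eq kp kv dxmax hkp xg (x s)]
    rw [heq] at htot
    convert htot using 1
    simp only [gradHuberU, if_neg (not_lt.mpr h)]
    rw [real_inner_smul_left]
    have : ‖x t - xg‖ ≠ 0 := norm_ne_zero_iff.mpr hne
    field_simp
    ring

/-- along the combined dynamics `ẍ = F − ∇U(x) − kv·ẋ` with `F ⊥ ẋ`,
the energy `V(t) = ½‖ẋ(t)‖² + U(x(t))` is differentiable with `V'(t) = −kv·‖ẋ(t)‖²`;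
in particular `V` is nonincreasing along the trajectory. -/
theorem energy_decrease_along_combined_dynamics
    (kp kv dxmax : ℝ) (hkp : 0 < kp) (hkv : 0 < kv) (hdxmax : 0 < dxmax)
    (xg : EuclideanSpace ℝ (Fin 3))
    (x v a F : ℝ → EuclideanSpace ℝ (Fin 3))
    (hx : ∀ t, 0 ≤ t → HasDerivAt x (v t) t)
    (hv : ∀ t, 0 ≤ t → HasDerivAt v (a t) t)
    (hF : ∀ t, 0 ≤ t → ⟪F t, v t⟫ = 0)
    (hacc : ∀ t, 0 ≤ t →
      a t = F t - gradHuberU kp kv dxmax xg (x t) - kv • v t) :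
    (∀ t, 0 ≤ t →
      HasDerivAt (fun s => 1 / 2 * ‖v s‖ ^ 2 + huberU kp kv dxmax xg (x s))
        (-(kv * ‖v t‖ ^ 2)) t) ∧
    (∀ s t : ℝ, 0 ≤ s → s ≤ t →
      1 / 2 * ‖v t‖ ^ 2 + huberU kp kv dxmax xg (x t) ≤
        1 / 2 * ‖v s‖ ^ 2 + huberU kp kv dxmax xg (x s)) := by
  have main : ∀ t, 0 ≤ t →
      HasDerivAt (fun s => 1 / 2 * ‖v s‖ ^ 2 + huberU kp kv dxmax xg (x s))
        (-(kv * ‖v t‖ ^ 2)) t := by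
    intro t ht
    have hkin : HasDerivAt (fun s => 1 / 2 * ‖v s‖ ^ 2) ⟪v t, a t⟫ t := by
      have h1 := ((hv t ht).inner ℝ (hv t ht)).const_mul (1 / 2 : ℝ)
      have heq : (fun s => (1/2 : ℝ) * ⟪v s, v s⟫) = fun s => 1 / 2 * ‖v s‖ ^ 2 := by
        funext s; rw [real_inner_self_eq_norm_sq]
      rw [heq] at h1
      refine h1.congr_deriv ?_
      rw [real_inner_comm (v t) (a t)]
      ring
    have hpot := huberU_comp_hasDerivAt kp kv dxmax hkp hkv hdxmax xg (hx t ht)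
    have hsum := hkin.add hpot
    refine hsum.congr_deriv ?_
    have hFv : ⟪v t, F t⟫ = (0:ℝ) := by rw [real_inner_comm]; exact hF t ht
    rw [hacc t ht, inner_sub_right, inner_sub_right, real_inner_smul_right, hFv,
      real_inner_comm (gradHuberU kp kv dxmax xg (x t)) (v t),
      real_inner_self_eq_norm_sq]
    ring
  refine ⟨main, ?_⟩
  intro s t hs hst
  have hanti : AntitoneOn (fun s => 1 / 2 * ‖v s‖ ^ 2 + huberU kp kv dxmax xg (x s))
      (Set.Ici (0:ℝ)) := by
    apply antitoneOn_of_deriv_nonpos (convex_Ici 0)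
    · intro u hu
      exact (main u hu).continuousAt.continuousWithinAt
    · intro u hu
      rw [interior_Ici] at hu
      exact (main u (le_of_lt hu)).differentiableAt.differentiableWithinAt
    · intro u hu
      rw [interior_Ici] at hu
      rw [(main u (le_of_lt hu)).deriv]
      have : (0:ℝ) ≤ kv * ‖v u‖ ^ 2 := by positivity
      linarith
  exact hanti hs (le_trans hs hst) hst
end
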